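/- arXiv:1501.07053 — 4 statements merged into one kernel-verified Lean document; each statement's English description precedes it below -/
import Mathlib

section
/- For any two finite sequences x and y over an alphabet Σ, and any symbol a not in Σ, and any way of interleaving arbitrary positive numbers of copies of a between, before, and after the symbols of x (yielding A(x)) and of y (yielding A(y)), the edit distance between x and y (with unit-cost insertions, deletions, substitutions) is at most the dynamic time warping distance between A(x) and A(y), where the DTWD point distance is 1 between distinct symbols and 0 between equal symbols. -/
/-- Dynamic time warping distance (real-valued); the cost of the initial
configuration is counted, and degenerate empty cases give 0. -/
def dtwd {α β : Type*} (d : α → β → ℝ) : List α → List β → ℝ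
  | [], _ => 0
  | _, [] => 0
  | [x], [y] => d x y
  | [x], y :: y' :: ys => d x y + dtwd d [x] (y' :: ys)
  | x :: x' :: xs, [y] => d x y + dtwd d (x' :: xs) [y]
  | x :: x' :: xs, y :: y' :: ys =>
      d x y + min (dtwd d (x' :: xs) (y :: y' :: ys))
        (min (dtwd d (x :: x' :: xs) (y' :: ys)) (dtwd d (x' :: xs) (y' :: ys)))
  termination_by x y => x.length + y.length

/-- `pad a q r` interleaves `r i` copies of the symbol `a` before, between and
after the symbols of `q` (where `r` has length `q.length + 1`):
`a^{r₁} q₁ a^{r₂} q₂ ⋯ a^{r_p} q_p a^{r_{p+1}}`. -/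
def pad {α : Type*} (a : α) : List α → List ℕ → List α
  | q :: qs, r :: rs => List.replicate r a ++ q :: pad a qs rs
  | [], r :: _ => List.replicate r a
  | _, [] => []

namespace Levenshtein

structure Cost (α β δ : Type*) where
  delete : α → δ
  insert : β → δ
  substitute : α → β → δ

def defaultCost {α : Type*} [DecidableEq α] : Cost α α ℕ where
  delete _ := 1
  insert _ := 1
  substitute a b := if a = b then 0 else 1

def impl {α β δ : Type*} [AddZeroClass δ] [Min δ] (C : Cost α β δ) (xs : List α) (y : β)
    (d : {r : List δ // 0 < r.length}) : {r : List δ // 0 < r.length} :=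
  let ⟨ds, w⟩ := d
  xs.zip (ds.zip ds.tail) |>.foldr
    (init := ⟨[C.insert y + ds.getLast (List.ne_nil_of_length_pos w)], by simp⟩)
    (fun ⟨x, d₀, d₁⟩ ⟨r, w⟩ =>
      ⟨min (C.delete x + r[0]) (min (C.insert y + d₀) (C.substitute x y + d₁)) :: r, by simp⟩)

end Levenshtein

def suffixLevenshtein {α β δ : Type*} [AddZeroClass δ] [Min δ] (C : Levenshtein.Cost α β δ)
    (xs : List α) (ys : List β) : {r : List δ // 0 < r.length} :=
  ys.foldr
    (Levenshtein.impl C xs)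
    (xs.foldr (init := ⟨[0], by simp⟩) (fun a ⟨r, w⟩ => ⟨(C.delete a + r[0]) :: r, by simp⟩))

def levenshtein {α β δ : Type*} [AddZeroClass δ] [Min δ] (C : Levenshtein.Cost α β δ)
    (xs : List α) (ys : List β) : δ :=
  let ⟨r, _⟩ := suffixLevenshtein C xs ys
  r[0]


section LevAPI

theorem Levenshtein.impl_cons {α β δ : Type*} [AddZeroClass δ] [Min δ]
    (C : Levenshtein.Cost α β δ) (x : α) (xs : List α) (y : β) (d₀ d₁ : δ) (ds : List δ)
    (w : 0 < (d₀ :: d₁ :: ds).length) (w' : 0 < (d₁ :: ds).length) :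
    (Levenshtein.impl C (x :: xs) y ⟨d₀ :: d₁ :: ds, w⟩).1 =
      min (C.delete x + (Levenshtein.impl C xs y ⟨d₁ :: ds, w'⟩).1[0]'(Levenshtein.impl C xs y ⟨d₁ :: ds, w'⟩).2)
        (min (C.insert y + d₀) (C.substitute x y + d₁)) :: (Levenshtein.impl C xs y ⟨d₁ :: ds, w'⟩).1 :=
  rfl

theorem suffixLevenshtein_cons₂ {α β δ : Type*} [AddZeroClass δ] [Min δ]
    (C : Levenshtein.Cost α β δ) (xs : List α) (y : β) (ys : List β) :
    suffixLevenshtein C xs (y :: ys) = Levenshtein.impl C xs y (suffixLevenshtein C xs ys) := rfl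

theorem levenshtein_eq {α β δ : Type*} [AddZeroClass δ] [Min δ]
    (C : Levenshtein.Cost α β δ) (xs : List α) (ys : List β) :
    levenshtein C xs ys = (suffixLevenshtein C xs ys).1[0]'(suffixLevenshtein C xs ys).2 := rfl

theorem suffixLevenshtein_cons₁_aux {α β δ : Type*} [AddZeroClass δ] [Min δ]
    (C : Levenshtein.Cost α β δ) (x : α) (xs : List α) (ys : List β) :
    ∃ v, (suffixLevenshtein C (x :: xs) ys).1 = v :: (suffixLevenshtein C xs ys).1 := by
  induction ys with
  | nil => exact ⟨_, rfl⟩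
  | cons y ys ih =>
    obtain ⟨v, hv⟩ := ih
    have hne := (suffixLevenshtein C xs ys).2
    obtain ⟨d₁, ds, hd⟩ := List.exists_cons_of_ne_nil (List.ne_nil_of_length_pos hne)
    have e1 : suffixLevenshtein C (x :: xs) ys = ⟨v :: d₁ :: ds, by simp⟩ :=
      Subtype.ext (by rw [hv, hd])
    have e2 : suffixLevenshtein C xs ys = ⟨d₁ :: ds, by simp⟩ := Subtype.ext hd
    rw [suffixLevenshtein_cons₂, suffixLevenshtein_cons₂, e1, e2, Levenshtein.impl_cons (w' := by simp)]
    exact ⟨_, rfl⟩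

theorem suffixLevenshtein_cons₁ {α β δ : Type*} [AddZeroClass δ] [Min δ]
    (C : Levenshtein.Cost α β δ) (x : α) (xs : List α) (ys : List β) :
    (suffixLevenshtein C (x :: xs) ys).1 =
      levenshtein C (x :: xs) ys :: (suffixLevenshtein C xs ys).1 := by
  obtain ⟨v, hv⟩ := suffixLevenshtein_cons₁_aux C x xs ys
  rw [hv]
  congr 1
  simp only [levenshtein_eq, hv, List.getElem_cons_zero]

@[simp] theorem levenshtein_cons_cons {α β δ : Type*} [AddZeroClass δ] [Min δ]
    (C : Levenshtein.Cost α β δ) (x : α) (xs : List α) (y : β) (ys : List β) :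
    levenshtein C (x :: xs) (y :: ys) = min (C.delete x + levenshtein C xs (y :: ys))
        (min (C.insert y + levenshtein C (x :: xs) ys) (C.substitute x y + levenshtein C xs ys)) := by
  have hne := (suffixLevenshtein C xs ys).2
  obtain ⟨d₁, ds, hd⟩ := List.exists_cons_of_ne_nil (List.ne_nil_of_length_pos hne)
  have e1 : suffixLevenshtein C (x :: xs) ys =
      ⟨levenshtein C (x :: xs) ys :: d₁ :: ds, by simp⟩ :=
    Subtype.ext (by rw [suffixLevenshtein_cons₁, hd])
  have e2 : suffixLevenshtein C xs ys = ⟨d₁ :: ds, by simp⟩ := Subtype.ext hd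
  have h1 : levenshtein C xs ys = d₁ := by
    simp only [levenshtein_eq, hd, List.getElem_cons_zero]
  have h2 : levenshtein C xs (y :: ys) =
      (Levenshtein.impl C xs y ⟨d₁ :: ds, by simp⟩).1[0]'(Levenshtein.impl C xs y ⟨d₁ :: ds, by simp⟩).2 := by
    rw [levenshtein_eq, suffixLevenshtein_cons₂]
    simp only [e2]
  rw [levenshtein_eq, suffixLevenshtein_cons₂, e1]
  rw [h1, h2]
  rfl

@[simp] theorem levenshtein_nil_nil {α β δ : Type*} [AddZeroClass δ] [Min δ]
    (C : Levenshtein.Cost α β δ) : levenshtein C ([] : List α) ([] : List β) = 0 := rfl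

theorem suffixLevenshtein_nil_left {α β δ : Type*} [AddZeroClass δ] [Min δ]
    (C : Levenshtein.Cost α β δ) (ys : List β) :
    (suffixLevenshtein C ([] : List α) ys).1 = [levenshtein C [] ys] := by
  cases ys with
  | nil => rfl
  | cons y ys => rfl

@[simp] theorem levenshtein_nil_cons {α β δ : Type*} [AddZeroClass δ] [Min δ]
    (C : Levenshtein.Cost α β δ) (y : β) (ys : List β) :
    levenshtein C ([] : List α) (y :: ys) = C.insert y + levenshtein C [] ys := by
  have h := suffixLevenshtein_nil_left C ys
  have e : levenshtein C ([] : List α) (y :: ys) = C.insert y +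
      (suffixLevenshtein C ([] : List α) ys).1.getLast
        (List.ne_nil_of_length_pos (suffixLevenshtein C [] ys).2) := rfl
  rw [e]
  congr 1
  simp only [h, List.getLast_singleton]

@[simp] theorem levenshtein_cons_nil {α β δ : Type*} [AddZeroClass δ] [Min δ]
    (C : Levenshtein.Cost α β δ) (x : α) (xs : List α) :
    levenshtein C (x :: xs) ([] : List β) = C.delete x + levenshtein C xs [] := rfl

@[simp] theorem Levenshtein.defaultCost_delete {α : Type*} [DecidableEq α] (a : α) :
    (Levenshtein.defaultCost : Levenshtein.Cost α α ℕ).delete a = 1 := rfl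

@[simp] theorem Levenshtein.defaultCost_insert {α : Type*} [DecidableEq α] (a : α) :
    (Levenshtein.defaultCost : Levenshtein.Cost α α ℕ).insert a = 1 := rfl

@[simp] theorem Levenshtein.defaultCost_substitute {α : Type*} [DecidableEq α] (a b : α) :
    (Levenshtein.defaultCost : Levenshtein.Cost α α ℕ).substitute a b = if a = b then 0 else 1 := rfl

end LevAPI

namespace EditDTWAux

variable {α β : Type*}

lemma dtwd_one_one (d : α → β → ℝ) (x y) : dtwd d [x] [y] = d x y := by simp [dtwd]

lemma dtwd_one_cons (d : α → β → ℝ) (x y y' ys) :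
    dtwd d [x] (y :: y' :: ys) = d x y + dtwd d [x] (y' :: ys) := by rw [dtwd]

lemma dtwd_cons_one (d : α → β → ℝ) (x x' xs y) :
    dtwd d (x :: x' :: xs) [y] = d x y + dtwd d (x' :: xs) [y] := by rw [dtwd]

lemma dtwd_cons_cons (d : α → β → ℝ) (x x' xs y y' ys) :
    dtwd d (x :: x' :: xs) (y :: y' :: ys) =
      d x y + min (dtwd d (x' :: xs) (y :: y' :: ys))
        (min (dtwd d (x :: x' :: xs) (y' :: ys)) (dtwd d (x' :: xs) (y' :: ys))) := by
  rw [dtwd]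

lemma pad_succ (a : α) (x : List α) (n : ℕ) (rs : List ℕ) :
    pad a x ((n+1) :: rs) = a :: pad a x (n :: rs) := by
  cases x <;> simp [pad, List.replicate_succ]

lemma pad_zero_cons (a : α) (x₀ : α) (xs : List α) (rs : List ℕ) :
    pad a (x₀ :: xs) (0 :: rs) = x₀ :: pad a xs rs := by simp [pad]

lemma pad_one (a : α) (rs : List ℕ) : pad a [] (1 :: rs) = [a] := by simp [pad]

lemma pad_eq_nil_iff (a : α) (x : List α) (r₀ : ℕ) (rs : List ℕ) :
    pad a x (r₀ :: rs) = [] ↔ x = [] ∧ r₀ = 0 := by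
  cases x <;> cases r₀ <;> simp [pad, List.replicate_succ]

lemma pad_guard (a : α) {x : List α} {r₀ : ℕ} {rs : List ℕ}
    (h : pad a x (r₀ :: rs) ≠ []) : x = [] → 0 < r₀ := fun hx =>
  Nat.pos_of_ne_zero fun hr => h ((pad_eq_nil_iff a x r₀ rs).mpr ⟨hx, hr⟩)

variable [DecidableEq α]

local notation "C" => (Levenshtein.defaultCost : Levenshtein.Cost α α ℕ)

lemma lev_nil_l (y : List α) : levenshtein C [] y = y.length := by
  induction y with
  | nil => simp
  | cons t ys ih => simp [ih, Nat.add_comm]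

lemma lev_nil_r (x : List α) : levenshtein C x [] = x.length := by
  induction x with
  | nil => simp
  | cons s xs ih => simp [ih, Nat.add_comm]

lemma lev_del (s : α) (x y : List α) :
    levenshtein C (s :: x) y ≤ 1 + levenshtein C x y := by
  cases y with
  | nil => simp
  | cons t ys =>
    simp only [levenshtein_cons_cons, Levenshtein.defaultCost_delete,
      Levenshtein.defaultCost_insert, Levenshtein.defaultCost_substitute]
    split_ifs <;> omega

lemma lev_ins (t : α) (x y : List α) :
    levenshtein C x (t :: y) ≤ 1 + levenshtein C x y := by
  cases x with
  | nil => simp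
  | cons s xs =>
    simp only [levenshtein_cons_cons, Levenshtein.defaultCost_delete,
      Levenshtein.defaultCost_insert, Levenshtein.defaultCost_substitute]
    split_ifs <;> omega

lemma lev_sub (s t : α) (x y : List α) :
    levenshtein C (s :: x) (t :: y) ≤ (if s = t then 0 else 1) + levenshtein C x y := by
  simp only [levenshtein_cons_cons, Levenshtein.defaultCost_delete,
    Levenshtein.defaultCost_insert, Levenshtein.defaultCost_substitute]
  split_ifs <;> omega

lemma lev_drop_r (t : α) (x y : List α) :
    levenshtein C x y ≤ 1 + levenshtein C x (t :: y) := by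
  induction x generalizing y with
  | nil => simp [lev_nil_l]; omega
  | cons s xs ih =>
    have h1 := ih y
    have h2 := lev_del s xs y
    simp only [levenshtein_cons_cons, Levenshtein.defaultCost_delete,
      Levenshtein.defaultCost_insert, Levenshtein.defaultCost_substitute]
    split_ifs <;> omega

lemma lev_drop_l (s : α) (x y : List α) :
    levenshtein C x y ≤ 1 + levenshtein C (s :: x) y := by
  induction y generalizing x with
  | nil => simp [lev_nil_r]; omega
  | cons t ys ih =>
    have h1 := ih x
    have h2 := lev_ins t x ys
    simp only [levenshtein_cons_cons, Levenshtein.defaultCost_delete,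
      Levenshtein.defaultCost_insert, Levenshtein.defaultCost_substitute]
    split_ifs <;> omega

lemma le_add_min3 {X c A B Cc : ℝ} (hA : X ≤ c + A) (hB : X ≤ c + B) (hC : X ≤ c + Cc) :
    X ≤ c + min A (min B Cc) := by
  rcases le_total A (min B Cc) with h | h
  · rw [min_eq_left h]; exact hA
  · rw [min_eq_right h]
    rcases le_total B Cc with h2 | h2
    · rw [min_eq_left h2]; exact hB
    · rw [min_eq_right h2]; exact hC

/-- The 0/1 point distance. -/
def d01 : α → α → ℝ := fun s t => if s = t then 0 else 1

lemma key (a : α) : ∀ n : ℕ, ∀ (x y : List α) (r₀ t₀ : ℕ) (rs ts : List ℕ),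
    (pad a x (r₀ :: rs)).length + (pad a y (t₀ :: ts)).length ≤ n →
    rs.length = x.length → ts.length = y.length →
    (∀ m ∈ rs, 0 < m) → (∀ m ∈ ts, 0 < m) →
    (x = [] → 0 < r₀) → (y = [] → 0 < t₀) →
    a ∉ x → a ∉ y →
    (((levenshtein C x y : ℕ) : ℝ) ≤
        dtwd (d01 (α := α)) (pad a x (r₀ :: rs)) (pad a y (t₀ :: ts))) ∧
    (∀ y₀ ys, y = y₀ :: ys → t₀ = 0 → 0 < r₀ →
      ((levenshtein C x ys : ℕ) : ℝ) ≤
        dtwd (d01 (α := α)) (pad a x (r₀ :: rs)) (pad a y (t₀ :: ts))) ∧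
    (∀ x₀ xs, x = x₀ :: xs → r₀ = 0 → 0 < t₀ →
      ((levenshtein C xs y : ℕ) : ℝ) ≤
        dtwd (d01 (α := α)) (pad a x (r₀ :: rs)) (pad a y (t₀ :: ts))) := by
  intro n
  induction n using Nat.strong_induction_on with
  | _ n IH =>
  intro x y r₀ t₀ rs ts hn hlx hly hpx hpy hgx hgy hax hay
  have ih := fun (x' y' : List α) (r₀' t₀' : ℕ) (rs' ts' : List ℕ)
      (h : (pad a x' (r₀' :: rs')).length + (pad a y' (t₀' :: ts')).length < n) =>
    IH _ h x' y' r₀' t₀' rs' ts' le_rfl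
  have haa : d01 a a = (0:ℝ) := by simp [d01]
  rcases r₀ with _ | m <;> rcases t₀ with _ | k
  · -- Case D : both heads are real symbols
    rcases x with _ | ⟨x₀, xs⟩
    · exact absurd (hgx rfl) (lt_irrefl 0)
    rcases y with _ | ⟨y₀, ys⟩
    · exact absurd (hgy rfl) (lt_irrefl 0)
    rcases rs with _ | ⟨r₂, rs₂⟩
    · simp at hlx
    rcases ts with _ | ⟨k₂, ts₂⟩
    · simp at hly
    have hr₂ : 0 < r₂ := hpx _ (List.mem_cons_self)
    have hk₂ : 0 < k₂ := hpy _ (List.mem_cons_self)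
    have hlx' : rs₂.length = xs.length := by simpa using hlx
    have hly' : ts₂.length = ys.length := by simpa using hly
    have hpx₂ : ∀ m ∈ rs₂, 0 < m := fun m hm => hpx m (List.mem_cons_of_mem _ hm)
    have hpy₂ : ∀ m ∈ ts₂, 0 < m := fun m hm => hpy m (List.mem_cons_of_mem _ hm)
    have hax' : a ∉ xs := fun h => hax (List.mem_cons_of_mem _ h)
    have hay' : a ∉ ys := fun h => hay (List.mem_cons_of_mem _ h)
    have hS1 : pad a xs (r₂ :: rs₂) ≠ [] := fun h => by
      have := ((pad_eq_nil_iff a xs r₂ rs₂).mp h).2; omega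
    have hT1 : pad a ys (k₂ :: ts₂) ≠ [] := fun h => by
      have := ((pad_eq_nil_iff a ys k₂ ts₂).mp h).2; omega
    obtain ⟨s₁, S₂, hS⟩ := List.exists_cons_of_ne_nil hS1
    obtain ⟨t₁, T₂, hT⟩ := List.exists_cons_of_ne_nil hT1
    simp only [pad_zero_cons, List.length_cons] at hn ⊢
    rw [hS, hT, dtwd_cons_cons, ← hS, ← hT]
    have hlt₁ : (pad a xs (r₂ :: rs₂)).length +
        (pad a (y₀ :: ys) (0 :: k₂ :: ts₂)).length < n := by
      simp only [pad_zero_cons, List.length_cons]; omega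
    have hlt₂ : (pad a (x₀ :: xs) (0 :: r₂ :: rs₂)).length +
        (pad a ys (k₂ :: ts₂)).length < n := by
      simp only [pad_zero_cons, List.length_cons]; omega
    have hlt₃ : (pad a xs (r₂ :: rs₂)).length + (pad a ys (k₂ :: ts₂)).length < n := by
      omega
    have hQ := (ih xs (y₀ :: ys) r₂ 0 rs₂ (k₂ :: ts₂) hlt₁ hlx' hly hpx₂ hpy
      (fun _ => hr₂) (fun h => absurd h (List.cons_ne_nil _ _)) hax' hay).2.1 y₀ ys rfl rfl hr₂
    have hQ' := (ih (x₀ :: xs) ys 0 k₂ (r₂ :: rs₂) ts₂ hlt₂ hlx hly' hpx hpy₂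
      (fun h => absurd h (List.cons_ne_nil _ _)) (fun _ => hk₂) hax hay').2.2 x₀ xs rfl rfl hk₂
    have hP3 := (ih xs ys r₂ k₂ rs₂ ts₂ hlt₃ hlx' hly' hpx₂ hpy₂
      (fun _ => hr₂) (fun _ => hk₂) hax' hay').1
    simp only [pad_zero_cons] at hQ hQ'
    have hsub := lev_sub x₀ y₀ xs ys
    have hc : ((levenshtein C (x₀ :: xs) (y₀ :: ys) : ℕ) : ℝ) ≤
        d01 x₀ y₀ + ((levenshtein C xs ys : ℕ) : ℝ) := by
      simp only [d01]
      split_ifs with hxy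
      · rw [if_pos hxy] at hsub
        have := (Nat.cast_le (α := ℝ)).mpr hsub
        push_cast at this; linarith
      · rw [if_neg hxy] at hsub
        have := (Nat.cast_le (α := ℝ)).mpr hsub
        push_cast at this; linarith
    refine ⟨?_, ?_, ?_⟩
    · exact le_add_min3 (by linarith) (by linarith) (by linarith)
    · intro _ _ _ _ h; exact absurd h (lt_irrefl 0)
    · intro _ _ _ _ h; exact absurd h (lt_irrefl 0)
  · -- Case C : S head real, T head = a
    rcases x with _ | ⟨x₀, xs⟩
    · exact absurd (hgx rfl) (lt_irrefl 0)
    rcases rs with _ | ⟨r₂, rs₂⟩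
    · simp at hlx
    have hr₂ : 0 < r₂ := hpx _ (List.mem_cons_self)
    have hlx' : rs₂.length = xs.length := by simpa using hlx
    have hpx₂ : ∀ m ∈ rs₂, 0 < m := fun m hm => hpx m (List.mem_cons_of_mem _ hm)
    have hax' : a ∉ xs := fun h => hax (List.mem_cons_of_mem _ h)
    have hxa : x₀ ≠ a := fun h => hax (h ▸ List.mem_cons_self)
    have hd : d01 x₀ a = (1:ℝ) := by simp [d01, hxa]
    have hS1 : pad a xs (r₂ :: rs₂) ≠ [] := fun h => by
      have := ((pad_eq_nil_iff a xs r₂ rs₂).mp h).2; omega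
    obtain ⟨s₁, S₂, hS⟩ := List.exists_cons_of_ne_nil hS1
    simp only [pad_zero_cons, pad_succ, List.length_cons] at hn ⊢
    by_cases hT1 : pad a y (k :: ts) = []
    · -- T = [a]
      obtain ⟨hy0, hk0⟩ := (pad_eq_nil_iff a y k ts).mp hT1
      subst hy0; subst hk0
      rw [hT1, hS, dtwd_cons_one, ← hS, hd]
      rw [hT1] at hn
      simp only [List.length_nil] at hn
      have hlt : (pad a xs (r₂ :: rs₂)).length + (pad a [] (1 :: ts)).length < n := by
        rw [pad_one]; simp only [List.length_singleton]; omega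
      have hP := (ih xs [] r₂ 1 rs₂ ts hlt hlx' hly hpx₂ hpy (fun _ => hr₂)
        (fun _ => one_pos) hax' hay).1
      rw [pad_one] at hP
      have heq : levenshtein C (x₀ :: xs) ([] : List α) = 1 + levenshtein C xs [] := by
        simp
      refine ⟨?_, ?_, ?_⟩
      · have : ((levenshtein C (x₀ :: xs) ([] : List α) : ℕ) : ℝ) =
            1 + ((levenshtein C xs ([] : List α) : ℕ) : ℝ) := by
          rw [heq]; push_cast; ring
        linarith
      · intro _ _ h _ _; exact absurd h.symm (List.cons_ne_nil _ _)
      · intro x₀' xs' heq2 _ _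
        injection heq2 with e1 e2; subst e1; subst e2
        linarith
    · -- T = a :: T₁ with T₁ ≠ []
      obtain ⟨t₁, T₂, hT⟩ := List.exists_cons_of_ne_nil hT1
      have hguardy : y = [] → 0 < k := pad_guard a hT1
      rw [hS, hT, dtwd_cons_cons, ← hS, ← hT, hd]
      have hlt₁ : (pad a xs (r₂ :: rs₂)).length + (pad a y ((k+1) :: ts)).length < n := by
        simp only [pad_succ, List.length_cons]; omega
      have hlt₂ : (pad a (x₀ :: xs) (0 :: r₂ :: rs₂)).length +
          (pad a y (k :: ts)).length < n := by
        simp only [pad_zero_cons, List.length_cons]; omega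
      have hlt₃ : (pad a xs (r₂ :: rs₂)).length + (pad a y (k :: ts)).length < n := by
        omega
      have hC1 := (ih xs y r₂ (k+1) rs₂ ts hlt₁ hlx' hly hpx₂ hpy (fun _ => hr₂)
        (fun _ => Nat.succ_pos k) hax' hay).1
      rw [pad_succ] at hC1
      have hC2 := (ih (x₀ :: xs) y 0 k (r₂ :: rs₂) ts hlt₂ hlx hly hpx hpy
        (fun h => absurd h (List.cons_ne_nil _ _)) hguardy hax hay)
      rw [pad_zero_cons] at hC2
      have hC3 := (ih xs y r₂ k rs₂ ts hlt₃ hlx' hly hpx₂ hpy (fun _ => hr₂)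
        hguardy hax' hay).1
      have hdel : ((levenshtein C (x₀ :: xs) y : ℕ) : ℝ) ≤
          1 + ((levenshtein C xs y : ℕ) : ℝ) := by
        exact_mod_cast lev_del x₀ xs y
      have hdropl : ((levenshtein C xs y : ℕ) : ℝ) ≤
          1 + ((levenshtein C (x₀ :: xs) y : ℕ) : ℝ) := by
        exact_mod_cast lev_drop_l x₀ xs y
      refine ⟨?_, ?_, ?_⟩
      · exact le_add_min3 (by linarith) (by linarith [hC2.1]) (by linarith)
      · intro _ _ _ h _; exact absurd h (Nat.succ_ne_zero k)
      · intro x₀' xs' heq2 _ _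
        injection heq2 with e1 e2; subst e1; subst e2
        exact le_add_min3 (by linarith) (by linarith [hC2.1]) (by linarith)
  · -- Case B : S head = a, T head real
    rcases y with _ | ⟨y₀, ys⟩
    · exact absurd (hgy rfl) (lt_irrefl 0)
    rcases ts with _ | ⟨k₂, ts₂⟩
    · simp at hly
    have hk₂ : 0 < k₂ := hpy _ (List.mem_cons_self)
    have hly' : ts₂.length = ys.length := by simpa using hly
    have hpy₂ : ∀ m ∈ ts₂, 0 < m := fun m hm => hpy m (List.mem_cons_of_mem _ hm)
    have hay' : a ∉ ys := fun h => hay (List.mem_cons_of_mem _ h)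
    have hya : a ≠ y₀ := fun h => hay (h ▸ List.mem_cons_self)
    have hd : d01 a y₀ = (1:ℝ) := by simp [d01, hya]
    have hT1 : pad a ys (k₂ :: ts₂) ≠ [] := fun h => by
      have := ((pad_eq_nil_iff a ys k₂ ts₂).mp h).2; omega
    obtain ⟨t₁, T₂, hT⟩ := List.exists_cons_of_ne_nil hT1
    simp only [pad_zero_cons, pad_succ, List.length_cons] at hn ⊢
    by_cases hS1 : pad a x (m :: rs) = []
    · -- S = [a]
      obtain ⟨hx0, hm0⟩ := (pad_eq_nil_iff a x m rs).mp hS1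
      subst hx0; subst hm0
      rw [hS1, hT, dtwd_one_cons, ← hT, hd]
      rw [hS1] at hn
      simp only [List.length_nil] at hn
      have hlt : (pad a ([] : List α) (1 :: rs)).length +
          (pad a ys (k₂ :: ts₂)).length < n := by
        rw [pad_one]; simp only [List.length_singleton]; omega
      have hP := (ih [] ys 1 k₂ rs ts₂ hlt hlx hly' hpx hpy₂ (fun _ => one_pos)
        (fun _ => hk₂) hax hay').1
      rw [pad_one] at hP
      have heq : levenshtein C ([] : List α) (y₀ :: ys) =
          1 + levenshtein C ([] : List α) ys := by
        simp
      refine ⟨?_, ?_, ?_⟩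
      · have : ((levenshtein C ([] : List α) (y₀ :: ys) : ℕ) : ℝ) =
            1 + ((levenshtein C ([] : List α) ys : ℕ) : ℝ) := by
          rw [heq]; push_cast; ring
        linarith
      · intro y₀' ys' heq2 _ _
        injection heq2 with e1 e2; subst e1; subst e2
        linarith
      · intro _ _ h _ _; exact absurd h.symm (List.cons_ne_nil _ _)
    · -- S = a :: S₁ with S₁ ≠ []
      obtain ⟨s₁, S₂, hS⟩ := List.exists_cons_of_ne_nil hS1
      have hguardx : x = [] → 0 < m := pad_guard a hS1
      rw [hS, hT, dtwd_cons_cons, ← hS, ← hT, hd]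
      have hlt₁ : (pad a x (m :: rs)).length +
          (pad a (y₀ :: ys) (0 :: k₂ :: ts₂)).length < n := by
        simp only [pad_zero_cons, List.length_cons]; omega
      have hlt₂ : (pad a x ((m+1) :: rs)).length + (pad a ys (k₂ :: ts₂)).length < n := by
        simp only [pad_succ, List.length_cons]; omega
      have hlt₃ : (pad a x (m :: rs)).length + (pad a ys (k₂ :: ts₂)).length < n := by
        omega
      have hB1 := (ih x (y₀ :: ys) m 0 rs (k₂ :: ts₂) hlt₁ hlx hly hpx hpy hguardx
        (fun h => absurd h (List.cons_ne_nil _ _)) hax hay)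
      rw [pad_zero_cons] at hB1
      have hB2 := (ih x ys (m+1) k₂ rs ts₂ hlt₂ hlx hly' hpx hpy₂
        (fun _ => Nat.succ_pos m) (fun _ => hk₂) hax hay').1
      rw [pad_succ] at hB2
      have hB3 := (ih x ys m k₂ rs ts₂ hlt₃ hlx hly' hpx hpy₂ hguardx
        (fun _ => hk₂) hax hay').1
      have hins : ((levenshtein C x (y₀ :: ys) : ℕ) : ℝ) ≤
          1 + ((levenshtein C x ys : ℕ) : ℝ) := by
        exact_mod_cast lev_ins y₀ x ys
      have hdropr : ((levenshtein C x ys : ℕ) : ℝ) ≤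
          1 + ((levenshtein C x (y₀ :: ys) : ℕ) : ℝ) := by
        exact_mod_cast lev_drop_r y₀ x ys
      refine ⟨?_, ?_, ?_⟩
      · exact le_add_min3 (by linarith [hB1.1]) (by linarith) (by linarith)
      · intro y₀' ys' heq2 _ _
        injection heq2 with e1 e2; subst e1; subst e2
        exact le_add_min3 (by linarith [hB1.1]) (by linarith) (by linarith)
      · intro _ _ _ h _; exact absurd h (Nat.succ_ne_zero m)
  · -- Case A : both heads = a
    simp only [pad_succ, List.length_cons] at hn ⊢
    refine ⟨?_, ?_, ?_⟩
    · by_cases hS1 : pad a x (m :: rs) = []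
      · obtain ⟨hx0, hm0⟩ := (pad_eq_nil_iff a x m rs).mp hS1
        subst hx0; subst hm0
        rw [hS1] at hn ⊢
        simp only [List.length_nil] at hn
        by_cases hT1 : pad a y (k :: ts) = []
        · obtain ⟨hy0, hk0⟩ := (pad_eq_nil_iff a y k ts).mp hT1
          subst hy0; subst hk0
          rw [hT1, dtwd_one_one, haa]
          simp
        · obtain ⟨t₁, T₂, hT⟩ := List.exists_cons_of_ne_nil hT1
          rw [hT, dtwd_one_cons, ← hT, haa]
          have hlt : (pad a ([] : List α) (1 :: rs)).length +
              (pad a y (k :: ts)).length < n := by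
            rw [pad_one]; simp only [List.length_singleton]; omega
          have hP := (ih [] y 1 k rs ts hlt hlx hly hpx hpy (fun _ => one_pos)
            (pad_guard a hT1) hax hay).1
          rw [pad_one] at hP
          linarith
      · obtain ⟨s₁, S₂, hS⟩ := List.exists_cons_of_ne_nil hS1
        by_cases hT1 : pad a y (k :: ts) = []
        · obtain ⟨hy0, hk0⟩ := (pad_eq_nil_iff a y k ts).mp hT1
          subst hy0; subst hk0
          rw [hT1] at hn ⊢
          simp only [List.length_nil] at hn
          rw [hS, dtwd_cons_one, ← hS, haa]
          have hlt : (pad a x (m :: rs)).length +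
              (pad a ([] : List α) (1 :: ts)).length < n := by
            rw [pad_one]; simp only [List.length_singleton]; omega
          have hP := (ih x [] m 1 rs ts hlt hlx hly hpx hpy (pad_guard a hS1)
            (fun _ => one_pos) hax hay).1
          rw [pad_one] at hP
          linarith
        · obtain ⟨t₁, T₂, hT⟩ := List.exists_cons_of_ne_nil hT1
          rw [hS, hT, dtwd_cons_cons, ← hS, ← hT, haa]
          have hlt₁ : (pad a x (m :: rs)).length + (pad a y ((k+1) :: ts)).length < n := by
            simp only [pad_succ, List.length_cons]; omega
          have hlt₂ : (pad a x ((m+1) :: rs)).length + (pad a y (k :: ts)).length < n := by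
            simp only [pad_succ, List.length_cons]; omega
          have hlt₃ : (pad a x (m :: rs)).length + (pad a y (k :: ts)).length < n := by
            omega
          have hA1 := (ih x y m (k+1) rs ts hlt₁ hlx hly hpx hpy (pad_guard a hS1)
            (fun _ => Nat.succ_pos k) hax hay).1
          rw [pad_succ] at hA1
          have hA2 := (ih x y (m+1) k rs ts hlt₂ hlx hly hpx hpy
            (fun _ => Nat.succ_pos m) (pad_guard a hT1) hax hay).1
          rw [pad_succ] at hA2
          have hA3 := (ih x y m k rs ts hlt₃ hlx hly hpx hpy (pad_guard a hS1)
            (pad_guard a hT1) hax hay).1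
          exact le_add_min3 (by linarith) (by linarith) (by linarith)
    · intro _ _ _ h _; exact absurd h (Nat.succ_ne_zero k)
    · intro _ _ _ h _; exact absurd h (Nat.succ_ne_zero m)

end EditDTWAux

/-- the unit-cost edit distance between `x` and `y` is at most the
dynamic time warping distance (0/1 point distance) between the padded sequences
`A(x)` and `A(y)`, for any positive padding multiplicities and any symbol `a`
not occurring in `x` or `y`. -/
theorem edit_le_dtwd_padded {α : Type*} [DecidableEq α] (a : α) (x y : List α)
    (hax : a ∉ x) (hay : a ∉ y) (r₁ r₂ : List ℕ)
    (hr₁ : r₁.length = x.length + 1) (hr₂ : r₂.length = y.length + 1)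
    (hp₁ : ∀ m ∈ r₁, 0 < m) (hp₂ : ∀ m ∈ r₂, 0 < m) :
    ((levenshtein Levenshtein.defaultCost x y : ℕ) : ℝ) ≤
      dtwd (fun s t => if s = t then 0 else 1) (pad a x r₁) (pad a y r₂) := by
  rcases r₁ with _ | ⟨r₀, rs⟩
  · simp at hr₁
  rcases r₂ with _ | ⟨t₀, ts⟩
  · simp at hr₂
  have hlx : rs.length = x.length := by simpa using hr₁
  have hly : ts.length = y.length := by simpa using hr₂
  have hr0 : 0 < r₀ := hp₁ _ (List.mem_cons_self)
  have ht0 : 0 < t₀ := hp₂ _ (List.mem_cons_self)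
  have hpx : ∀ m ∈ rs, 0 < m := fun m hm => hp₁ m (List.mem_cons_of_mem _ hm)
  have hpy : ∀ m ∈ ts, 0 < m := fun m hm => hp₂ m (List.mem_cons_of_mem _ hm)
  have h := (EditDTWAux.key a
    ((pad a x (r₀ :: rs)).length + (pad a y (t₀ :: ts)).length)
    x y r₀ t₀ rs ts le_rfl hlx hly hpx hpy (fun _ => hr0) (fun _ => ht0) hax hay).1
  exact h
end

section
/- Computing the maximum weight common subsequence of two strings of length n over an alphabet Σ with integer weights w: Σ → {1,...,K} reduces to computing the (unweighted) longest common subsequence of two strings of length at most K·n: namely, if each symbol ℓ in each string is replaced by w(ℓ) consecutive copies of ℓ, then the LCS length of the resulting strings equals the maximum total weight of a common subsequence of the original strings. -/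
/-- Length of a longest common subsequence of two lists. -/
noncomputable def lcs {α : Type*} (P₁ P₂ : List α) : ℕ :=
  sSup {n | ∃ z : List α, z.Sublist P₁ ∧ z.Sublist P₂ ∧ z.length = n}

/-- Maximum total weight of a common subsequence of two lists. -/
noncomputable def wlcs {α : Type*} (w : α → ℕ) (P₁ P₂ : List α) : ℕ :=
  sSup {n | ∃ z : List α, z.Sublist P₁ ∧ z.Sublist P₂ ∧ (z.map w).sum = n}

/-- The blow-up map: each symbol `c` is replaced by `w c` consecutive copies of `c`. -/
def blow {α : Type*} (w : α → ℕ) (s : List α) : List α :=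
  (s.map fun c => List.replicate (w c) c).flatten

lemma sublist_flatten {α} {l₁ l₂ : List (List α)} (h : l₁.Sublist l₂) :
    l₁.flatten.Sublist l₂.flatten := by
  induction h with
  | slnil => simp
  | cons a _ ih => exact ih.trans (List.sublist_append_right a _)
  | cons_cons a _ ih => exact (List.Sublist.refl a).append ih

lemma blow_sublist {α} (w : α → ℕ) {z s : List α} (h : z.Sublist s) :
    (blow w z).Sublist (blow w s) :=
  sublist_flatten (h.map _)

lemma blow_length {α} (w : α → ℕ) (s : List α) :
    (blow w s).length = (s.map w).sum := by
  simp [blow, List.length_flatten, Function.comp_def]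

lemma key {α} (w : α → ℕ) : ∀ n (s₁ s₂ u : List α), s₁.length + s₂.length ≤ n →
    u.Sublist (blow w s₁) → u.Sublist (blow w s₂) →
    ∃ z : List α, z.Sublist s₁ ∧ z.Sublist s₂ ∧ u.length ≤ (z.map w).sum := by
  intro n
  induction n with
  | zero =>
    intro s₁ s₂ u hn h₁ h₂
    have : s₁ = [] := by
      cases s₁ <;> simp_all
    subst this
    simp [blow] at h₁; subst h₁
    exact ⟨[], by simp⟩
  | succ n ih =>
    intro s₁ s₂ u hn h₁ h₂
    match s₁, s₂ with
    | [], _ =>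
      simp [blow] at h₁; subst h₁
      exact ⟨[], by simp⟩
    | _, [] =>
      simp [blow] at h₂; subst h₂
      exact ⟨[], by simp⟩
    | a :: t₁, b :: t₂ =>
      have hb1 : blow w (a :: t₁) = List.replicate (w a) a ++ blow w t₁ := by simp [blow]
      have hb2 : blow w (b :: t₂) = List.replicate (w b) b ++ blow w t₂ := by simp [blow]
      rw [hb1, List.sublist_append_iff] at h₁
      rw [hb2, List.sublist_append_iff] at h₂
      obtain ⟨p₁, q₁, hu₁, hp₁, hq₁⟩ := h₁
      obtain ⟨p₂, q₂, hu₂, hp₂, hq₂⟩ := h₂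
      rw [List.sublist_replicate_iff] at hp₁ hp₂
      obtain ⟨k₁, hk₁, rfl⟩ := hp₁
      obtain ⟨k₂, hk₂, rfl⟩ := hp₂
      rcases Nat.eq_zero_or_pos k₁ with hz | hpos₁
      · subst hz
        simp at hu₁; subst hu₁
        have h₂' : u.Sublist (blow w (b :: t₂)) := by
          rw [hb2, hu₂]
          exact ((List.replicate_sublist_replicate b).2 hk₂).append hq₂
        obtain ⟨z, hz₁, hz₂, hzl⟩ := ih t₁ (b :: t₂) u (by simp at hn ⊢; omega) hq₁ h₂'
        exact ⟨z, hz₁.cons a, hz₂, hzl⟩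
      rcases Nat.eq_zero_or_pos k₂ with hz | hpos₂
      · subst hz
        simp at hu₂; subst hu₂
        obtain ⟨z, hz₁, hz₂, hzl⟩ := ih (a :: t₁) t₂ u (by simp at hn ⊢; omega)
          (by rw [hb1, hu₁]; exact ((List.replicate_sublist_replicate a).2 hk₁).append hq₁) hq₂
        exact ⟨z, hz₁, hz₂.cons b, hzl⟩
      -- both positive: a = b
      have hab : a = b := by
        have h1 : u.head? = some a := by
          rw [hu₁]
          cases k₁ with
          | zero => omega
          | succ m => simp [List.replicate_succ]
        have h2 : u.head? = some b := by
          rw [hu₂]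
          cases k₂ with
          | zero => omega
          | succ m => simp [List.replicate_succ]
        rw [h1] at h2; exact Option.some.inj h2
      subst hab
      rcases le_total k₁ k₂ with hle | hle
      · have heq : q₁ = List.replicate (k₂ - k₁) a ++ q₂ := by
          have : List.replicate k₁ a ++ q₁ = List.replicate k₁ a ++ (List.replicate (k₂ - k₁) a ++ q₂) := by
            rw [← List.append_assoc, ← List.replicate_add, Nat.add_sub_cancel' hle, ← hu₂, hu₁]
          exact List.append_cancel_left this
        have hq₂' : q₂.Sublist (blow w t₁) := by
          refine List.Sublist.trans ?_ hq₁
          rw [heq]; exact List.sublist_append_right _ _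
        obtain ⟨z, hz₁, hz₂, hzl⟩ := ih t₁ t₂ q₂ (by simp at hn ⊢; omega) hq₂' hq₂
        refine ⟨a :: z, hz₁.cons₂ a, hz₂.cons₂ a, ?_⟩
        rw [hu₂]
        simp only [List.length_append, List.length_replicate, List.map_cons, List.sum_cons]
        omega
      · have heq : q₂ = List.replicate (k₁ - k₂) a ++ q₁ := by
          have : List.replicate k₂ a ++ q₂ = List.replicate k₂ a ++ (List.replicate (k₁ - k₂) a ++ q₁) := by
            rw [← List.append_assoc, ← List.replicate_add, Nat.add_sub_cancel' hle, ← hu₁, hu₂]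
          exact List.append_cancel_left this
        have hq₁' : q₁.Sublist (blow w t₂) := by
          refine List.Sublist.trans ?_ hq₂
          rw [heq]; exact List.sublist_append_right _ _
        obtain ⟨z, hz₁, hz₂, hzl⟩ := ih t₁ t₂ q₁ (by simp at hn ⊢; omega) hq₁ hq₁'
        refine ⟨a :: z, hz₁.cons₂ a, hz₂.cons₂ a, ?_⟩
        rw [hu₁]
        simp only [List.length_append, List.length_replicate, List.map_cons, List.sum_cons]
        omega

/-- computing a maximum-weight common subsequence (weights in
`{1,…,K}`) reduces to the unweighted LCS of the blown-up strings, which have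
length at most `K·n`: the LCS of the blow-ups equals the WLCS of the originals. -/
theorem wlcs_eq_lcs_blow {α : Type*} (K : ℕ) (w : α → ℕ)
    (hw : ∀ c : α, 1 ≤ w c ∧ w c ≤ K) (P₁ P₂ : List α) :
    (blow w P₁).length ≤ K * P₁.length ∧
    (blow w P₂).length ≤ K * P₂.length ∧
    lcs (blow w P₁) (blow w P₂) = wlcs w P₁ P₂ := by
  have hlen : ∀ P : List α, (blow w P).length ≤ K * P.length := by
    intro P
    rw [blow_length, mul_comm]
    calc (P.map w).sum ≤ (P.map w).length • K :=
          List.sum_le_card_nsmul _ K (by simp; intro x hx; exact (hw x).2)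
      _ = P.length * K := by simp [smul_eq_mul]
  refine ⟨hlen P₁, hlen P₂, ?_⟩
  have bddA : BddAbove {n | ∃ z : List α, z.Sublist (blow w P₁) ∧ z.Sublist (blow w P₂) ∧ z.length = n} := by
    refine ⟨(blow w P₁).length, fun n ⟨z, h1, _, hl⟩ => ?_⟩
    exact hl ▸ h1.length_le
  have bddB : BddAbove {n | ∃ z : List α, z.Sublist P₁ ∧ z.Sublist P₂ ∧ (z.map w).sum = n} := by
    refine ⟨(P₁.map w).sum, fun n ⟨z, h1, _, hs⟩ => ?_⟩
    exact hs ▸ (h1.map w).sum_le_sum (by simp)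
  apply le_antisymm
  · refine csSup_le ⟨0, [], List.nil_sublist _, List.nil_sublist _, rfl⟩ ?_
    rintro n ⟨u, h1, h2, rfl⟩
    obtain ⟨z, hz₁, hz₂, hzl⟩ := key w (P₁.length + P₂.length) P₁ P₂ u le_rfl h1 h2
    exact hzl.trans (le_csSup bddB ⟨z, hz₁, hz₂, rfl⟩)
  · refine csSup_le ⟨0, [], List.nil_sublist _, List.nil_sublist _, rfl⟩ ?_
    rintro n ⟨z, h1, h2, rfl⟩
    exact le_csSup bddA ⟨blow w z, blow_sublist w h1, blow_sublist w h2, blow_length w z⟩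
end

section
/- For DTWD over symbols (distance 1 between distinct symbols, 0 between equal symbols): for any sequences x, y, DTWD(x,y) = 0 if and only if the sequences obtained from x and y by collapsing each maximal run of equal consecutive symbols to a single symbol are identical. -/
/-- Dynamic time warping distance over symbols: the point distance is `1`
between distinct symbols and `0` between equal symbols; empty-vs-nonempty is
`⊤` (no traversal exists). -/
noncomputable def dtwdSym {α : Type*} [DecidableEq α] : List α → List α → ℕ∞
  | [], [] => 0
  | [], _ :: _ => ⊤
  | _ :: _, [] => ⊤
  | [x], [y] => if x = y then 0 else 1
  | [x], y :: y' :: ys => (if x = y then 0 else 1) + dtwdSym [x] (y' :: ys)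
  | x :: x' :: xs, [y] => (if x = y then 0 else 1) + dtwdSym (x' :: xs) [y]
  | x :: x' :: xs, y :: y' :: ys =>
      (if x = y then 0 else 1) + min (dtwdSym (x' :: xs) (y :: y' :: ys))
        (min (dtwdSym (x :: x' :: xs) (y' :: ys)) (dtwdSym (x' :: xs) (y' :: ys)))
  termination_by x y => x.length + y.length

/-- `destutter'` always produces a list starting with its seed. -/
lemma destutter'_exists_cons {α : Type*} (R : α → α → Prop) [DecidableRel R]
    (l : List α) (a : α) : ∃ t, l.destutter' R a = a :: t := by
  induction l generalizing a with
  | nil => exact ⟨[], rfl⟩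
  | cons b l ih =>
    rw [List.destutter'_cons]
    split
    · exact ⟨_, rfl⟩
    · exact ih a

lemma ite_eq_zero_iff {α : Type*} [DecidableEq α] (x y : α) :
    (if x = y then (0 : ℕ∞) else 1) = 0 ↔ x = y := by
  split <;> simp_all

lemma min_eq_zero_iff (a b : ℕ∞) : min a b = 0 ↔ a = 0 ∨ b = 0 := by
  rcases le_total a b with h | h <;> simp [min_eq_left, min_eq_right, h] <;> rintro rfl <;>
    simpa using h

/-- the key destutter recurrence for the two-cons case -/
lemma destutter_key {α : Type*} [DecidableEq α] (x x' y y' : α) (xs ys : List α) :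
    (x :: x' :: xs).destutter (· ≠ ·) = (y :: y' :: ys).destutter (· ≠ ·) ↔
      x = y ∧ ((x' :: xs).destutter (· ≠ ·) = (y :: y' :: ys).destutter (· ≠ ·) ∨
        (x :: x' :: xs).destutter (· ≠ ·) = (y' :: ys).destutter (· ≠ ·) ∨
        (x' :: xs).destutter (· ≠ ·) = (y' :: ys).destutter (· ≠ ·)) := by
  obtain ⟨tx, htx⟩ := destutter'_exists_cons (· ≠ ·) xs x'
  obtain ⟨ty, hty⟩ := destutter'_exists_cons (· ≠ ·) ys y'
  have hA : (x' :: xs).destutter (· ≠ ·) = x' :: tx := by rw [List.destutter_cons', htx]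
  have hB : (y' :: ys).destutter (· ≠ ·) = y' :: ty := by rw [List.destutter_cons', hty]
  have hX : (x :: x' :: xs).destutter (· ≠ ·)
      = if x = x' then x' :: tx else x :: x' :: tx := by
    rw [List.destutter_cons_cons]
    by_cases h : x = x'
    · rw [if_neg (by simpa using h), if_pos h, h, htx]
    · rw [if_pos h, if_neg h, htx]
  have hY : (y :: y' :: ys).destutter (· ≠ ·)
      = if y = y' then y' :: ty else y :: y' :: ty := by
    rw [List.destutter_cons_cons]
    by_cases h : y = y'
    · rw [if_neg (by simpa using h), if_pos h, h, hty]
    · rw [if_pos h, if_neg h, hty]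
  rw [hA, hB, hX, hY]
  by_cases h1 : x = x' <;> by_cases h2 : y = y' <;>
      simp only [h1, h2, if_pos, if_neg, if_true, if_false]
  · subst h1; subst h2
    constructor
    · rintro h
      exact ⟨((List.cons.injEq ..).mp h).1, Or.inl h⟩
    · rintro ⟨rfl, h | h | h⟩ <;> exact h
  · subst h1
    constructor
    · rintro h
      exact ⟨((List.cons.injEq ..).mp h).1, Or.inl h⟩
    · rintro ⟨rfl, h | h | h⟩
      · exact h
      · exact absurd ((List.cons.injEq ..).mp h).1 h2
      · exact absurd ((List.cons.injEq ..).mp h).1 h2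
  · subst h2
    constructor
    · rintro h
      exact ⟨((List.cons.injEq ..).mp h).1, Or.inr (Or.inl h)⟩
    · rintro ⟨rfl, h | h | h⟩
      · exact absurd ((List.cons.injEq ..).mp h).1 (fun he => h1 he.symm)
      · exact h
      · exact absurd ((List.cons.injEq ..).mp h).1 (fun he => h1 he.symm)
  · constructor
    · rintro h
      obtain ⟨rfl, h'⟩ := (List.cons.injEq ..).mp h
      exact ⟨rfl, Or.inr (Or.inr h')⟩
    · rintro ⟨rfl, h | h | h⟩
      · exact absurd ((List.cons.injEq ..).mp h).1.symm (by rintro rfl; exact h1 rfl)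
      · exact absurd ((List.cons.injEq ..).mp h).1 (by rintro rfl; exact h2 rfl)
      · rw [(List.cons.injEq ..).mpr ⟨rfl, h⟩]

/-- for DTWD over symbols, `DTWD(x,y) = 0` iff the sequences
obtained from `x` and `y` by collapsing each maximal run of equal consecutive
symbols to a single symbol are identical. -/
theorem dtwd_eq_zero_iff_destutter {α : Type*} [DecidableEq α] (x y : List α) :
    dtwdSym x y = 0 ↔ x.destutter (· ≠ ·) = y.destutter (· ≠ ·) := by
  match x, y with
  | [], [] => simp [dtwdSym]
  | [], b :: l =>
    rw [dtwdSym]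
    obtain ⟨t, ht⟩ := destutter'_exists_cons (· ≠ ·) l b
    rw [List.destutter_nil, List.destutter_cons', ht]
    simp
  | a :: l, [] =>
    rw [dtwdSym]
    obtain ⟨t, ht⟩ := destutter'_exists_cons (· ≠ ·) l a
    rw [List.destutter_nil, List.destutter_cons', ht]
    simp
  | [x], [y] =>
    rw [dtwdSym, ite_eq_zero_iff]
    simp [List.destutter]
  | [x], y :: y' :: ys =>
    rw [dtwdSym, add_eq_zero, ite_eq_zero_iff,
      dtwd_eq_zero_iff_destutter [x] (y' :: ys)]
    obtain ⟨t, ht⟩ := destutter'_exists_cons (· ≠ ·) ys y'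
    have hB : (y' :: ys).destutter (· ≠ ·) = y' :: t := by rw [List.destutter_cons', ht]
    have hY : (y :: y' :: ys).destutter (· ≠ ·)
        = if y = y' then y' :: t else y :: y' :: t := by
      rw [List.destutter_cons_cons]
      by_cases h : y = y'
      · rw [if_neg (by simpa using h), if_pos h, h, ht]
      · rw [if_pos h, if_neg h, ht]
    rw [hB, hY, List.destutter_singleton]
    by_cases h : y = y' <;> simp only [h, if_true, if_false, if_pos, if_neg]
    · subst h
      constructor
      · rintro ⟨rfl, h2⟩; exact h2
      · rintro h2; exact ⟨((List.cons.injEq ..).mp h2).1, h2⟩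
    · constructor
      · rintro ⟨rfl, h2⟩
        exact absurd ((List.cons.injEq ..).mp h2).1 h
      · rintro h2
        exact absurd ((List.cons.injEq ..).mp h2).2.symm (List.cons_ne_nil _ _)
  | x :: x' :: xs, [y] =>
    rw [dtwdSym, add_eq_zero, ite_eq_zero_iff,
      dtwd_eq_zero_iff_destutter (x' :: xs) [y]]
    obtain ⟨t, ht⟩ := destutter'_exists_cons (· ≠ ·) xs x'
    have hA : (x' :: xs).destutter (· ≠ ·) = x' :: t := by rw [List.destutter_cons', ht]
    have hX : (x :: x' :: xs).destutter (· ≠ ·)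
        = if x = x' then x' :: t else x :: x' :: t := by
      rw [List.destutter_cons_cons]
      by_cases h : x = x'
      · rw [if_neg (by simpa using h), if_pos h, h, ht]
      · rw [if_pos h, if_neg h, ht]
    rw [hA, hX, List.destutter_singleton]
    by_cases h : x = x' <;> simp only [h, if_true, if_false, if_pos, if_neg]
    · subst h
      constructor
      · rintro ⟨rfl, h2⟩; exact h2
      · rintro h2; exact ⟨((List.cons.injEq ..).mp h2).1, h2⟩
    · constructor
      · rintro ⟨rfl, h2⟩
        exact absurd ((List.cons.injEq ..).mp h2).1.symm h
      · rintro h2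
        exact absurd ((List.cons.injEq ..).mp h2).2 (List.cons_ne_nil _ _)
  | x :: x' :: xs, y :: y' :: ys =>
    rw [dtwdSym, add_eq_zero, ite_eq_zero_iff, min_eq_zero_iff, min_eq_zero_iff,
      dtwd_eq_zero_iff_destutter (x' :: xs) (y :: y' :: ys),
      dtwd_eq_zero_iff_destutter (x :: x' :: xs) (y' :: ys),
      dtwd_eq_zero_iff_destutter (x' :: xs) (y' :: ys),
      destutter_key]
  termination_by x.length + y.length
end

section
/- Lower bound step for the k-string selection gadget: with strings P_1,...,P_k as constructed (each P_i containing around n aligned vector-gadget intervals plus padding symbols 3_2,...,3_k of weights B_2 > ... > B_k, and interval scores E_U for close tuples, E_U + 1 for a far tuple), if there exist indices t_1,...,t_k such that the vector tuple (α^1_{t_1},...,α^k_{t_k}) is r-far, then the k strings admit a common-subsequence matching of total weight at least E_G + 1, where E_G = n·E_U + B_2 + (2n+1)·Σ_{i=2}^{k} B_i. -/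
/-- A (common-subsequence) matching of the `k` strings `T`: a list of position
tuples, strictly increasing coordinatewise, each tuple pointing at equal
symbols in all `k` strings. -/
def IsMatching {α : Type*} {k : ℕ} (T : Fin k → List α) (M : List (Fin k → ℕ)) : Prop :=
  M.Chain' (fun a b => ∀ i, a i < b i) ∧
    ∀ tup ∈ M, ∃ s : α, ∀ i, (T i)[tup i]? = some s

/-- Weight of a matching, read off in coordinate `i`. -/
def matchWeight {α : Type*} [Inhabited α] {k : ℕ} (w : α → ℕ) (T : Fin k → List α)
    (i : Fin k) (M : List (Fin k → ℕ)) : ℕ :=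
  (M.map fun tup => w ((T i).getD (tup i) default)).sum

/-- The block of padding symbols `3_a 3_{a+1} ⋯ 3_b`. -/
def padBlock {α : Type*} (pad : ℕ → α) (a b : ℕ) : List α :=
  (List.range' a (b + 1 - a)).map pad

/-- `m` concatenated copies of the list `l`. -/
def rep {α : Type*} (m : ℕ) (l : List α) : List α :=
  (List.replicate m l).flatten

/-- The decorated vector-gadget interval `VG'_i(v)`:
`0 ∘ v ∘ 2` for `i = 1` and `0 ∘ v ∘ 2 ∘ (3_2 ⋯ 3_i)` for `i ≥ 2`. -/
def decorate {α : Type*} (c0 c2 : α) (pad : ℕ → α) (ii : ℕ) (v : List α) : List α :=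
  c0 :: v ++ c2 :: padBlock pad 2 ii

/-- The selection-gadget string `P_i` (with paper index `ii = i + 1 ∈ {1,…,k}`):
`(3_{i+1}⋯3_k)^Q (3_2⋯3_i) (VG'_i(f))^{(i−1)n} (VG'_i(α^i_1) ⋯ VG'_i(α^i_n))
(VG'_i(f))^{(i−1)n} (3_{i+1}⋯3_k)^Q`. -/
def selString {α : Type*} (k n : ℕ) (c0 c2 : α) (pad : ℕ → α)
    (VG : ℕ → Fin n → List α) (VGf : ℕ → List α) (Q : ℕ) (ii : ℕ) : List α :=
  rep Q (padBlock pad (ii + 1) k) ++ padBlock pad 2 ii ++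
    rep ((ii - 1) * n) (decorate c0 c2 pad ii (VGf ii)) ++
    ((List.finRange n).map fun t => decorate c0 c2 pad ii (VG ii t)).flatten ++
    rep ((ii - 1) * n) (decorate c0 c2 pad ii (VGf ii)) ++
    rep Q (padBlock pad (ii + 1) k)


section Generic
set_option linter.unusedSectionVars false
variable {α : Type*} [Inhabited α] {k : ℕ} {T : Fin k → List α} {w : α → ℕ}

theorem isMatching_append {M₁ M₂ : List (Fin k → ℕ)}
    (h₁ : IsMatching T M₁) (h₂ : IsMatching T M₂)
    (hsep : ∀ a ∈ M₁, ∀ b ∈ M₂, ∀ i, a i < b i) : IsMatching T (M₁ ++ M₂) := by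
  constructor
  · unfold List.Chain'; rw [List.isChain_append]
    exact ⟨h₁.1, h₂.1, fun x hx y hy => hsep x (List.mem_of_mem_getLast? hx) y (List.mem_of_mem_head? hy)⟩
  · intro tup htup
    rcases List.mem_append.1 htup with h | h
    · exact h₁.2 tup h
    · exact h₂.2 tup h

theorem matchWeight_append (i : Fin k) (M₁ M₂ : List (Fin k → ℕ)) :
    matchWeight w T i (M₁ ++ M₂) = matchWeight w T i M₁ + matchWeight w T i M₂ := by
  simp [matchWeight]

theorem isMatching_nil : IsMatching T ([] : List (Fin k → ℕ)) := by
  constructor <;> simp [List.Chain']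

/-- a singleton matching -/
theorem isMatching_single {f : Fin k → ℕ} {s : α} (h : ∀ i, (T i)[f i]? = some s) :
    IsMatching T [f] := by
  constructor
  · simp [List.Chain']
  · intro tup htup; simp at htup; subst htup; exact ⟨s, h⟩

theorem matchWeight_single (i : Fin k) (f : Fin k → ℕ) {s : α}
    (h : (T i)[f i]? = some s) : matchWeight w T i [f] = w s := by
  simp [matchWeight, List.getD_eq_getElem?_getD, h]

/-- block of positions indexed by a range -/
theorem isMatching_block (pos : Fin k → ℕ → ℕ) (β : ℕ) (s : ℕ → α)
    (hmono : ∀ i, ∀ c < β, ∀ c' < β, c < c' → pos i c < pos i c')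
    (hsym : ∀ c < β, ∀ i, (T i)[pos i c]? = some (s c)) :
    IsMatching T ((List.range β).map (fun c i => pos i c)) := by
  constructor
  · apply List.Pairwise.isChain
    have := List.pairwise_lt_range (n := β)
    have h2 : (List.range β).Pairwise (fun c c' => c < β ∧ c' < β ∧ c < c') := by
      apply List.Pairwise.imp_of_mem (l := List.range β) ?_ this
      intro a b ha hb hab
      exact ⟨List.mem_range.1 ha, List.mem_range.1 hb, hab⟩
    refine (List.pairwise_map).2 (h2.imp ?_)
    rintro a b ⟨ha, hb, hab⟩ i
    exact hmono i a ha b hb hab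
  · intro tup htup
    simp only [List.mem_map, List.mem_range] at htup
    obtain ⟨c, hc, rfl⟩ := htup
    exact ⟨s c, fun i => hsym c hc i⟩

theorem matchWeight_block (i : Fin k) (pos : Fin k → ℕ → ℕ) (β : ℕ) (s : ℕ → α)
    (hsym : ∀ c < β, (T i)[pos i c]? = some (s c)) :
    matchWeight w T i ((List.range β).map (fun c i => pos i c)) =
      ((List.range β).map (fun c => w (s c))).sum := by
  unfold matchWeight
  rw [List.map_map]
  congr 1
  apply List.map_congr_left
  intro c hc
  simp only [Function.comp]
  rw [List.getD_eq_getElem?_getD, hsym c (List.mem_range.1 hc)]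
  rfl


/-- block of positions, function-first form -/
theorem isMatching_block' (F : ℕ → Fin k → ℕ) (β : ℕ) (s : ℕ → α)
    (hmono : ∀ i, ∀ c < β, ∀ c' < β, c < c' → F c i < F c' i)
    (hsym : ∀ c < β, ∀ i, (T i)[F c i]? = some (s c)) :
    IsMatching T ((List.range β).map F) := by
  constructor
  · apply List.Pairwise.isChain
    have h2 : (List.range β).Pairwise (fun c c' => c < β ∧ c' < β ∧ c < c') := by
      apply List.Pairwise.imp_of_mem (l := List.range β) ?_ (List.pairwise_lt_range (n := β))
      intro a b ha hb hab
      exact ⟨List.mem_range.1 ha, List.mem_range.1 hb, hab⟩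
    refine (List.pairwise_map).2 (h2.imp ?_)
    rintro a b ⟨ha, hb, hab⟩ i
    exact hmono i a ha b hb hab
  · intro tup htup
    simp only [List.mem_map, List.mem_range] at htup
    obtain ⟨c, hc, rfl⟩ := htup
    exact ⟨s c, fun i => hsym c hc i⟩

theorem matchWeight_block' (i : Fin k) (F : ℕ → Fin k → ℕ) (β : ℕ) (s : ℕ → α)
    (hsym : ∀ c < β, (T i)[F c i]? = some (s c)) :
    matchWeight w T i ((List.range β).map F) =
      ((List.range β).map (fun c => w (s c))).sum := by
  unfold matchWeight
  rw [List.map_map]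
  congr 1
  apply List.map_congr_left
  intro c hc
  simp only [Function.comp]
  rw [List.getD_eq_getElem?_getD, hsym c (List.mem_range.1 hc)]
  rfl

/-- shifting a matching of substrings into the big strings -/
theorem isMatching_shift {g : Fin k → List α} {M' : List (Fin k → ℕ)} (o : Fin k → ℕ)
    (hsub : ∀ i, ∀ q < (g i).length, (T i)[o i + q]? = (g i)[q]?)
    (hM : IsMatching g M') :
    IsMatching T (M'.map (fun f i => o i + f i)) := by
  constructor
  · refine List.isChain_map_of_isChain _ ?_ hM.1
    intro a b hab i; exact Nat.add_lt_add_left (hab i) _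
  · intro tup htup
    simp only [List.mem_map] at htup
    obtain ⟨f, hf, rfl⟩ := htup
    obtain ⟨s, hs⟩ := hM.2 f hf
    refine ⟨s, fun i => ?_⟩
    have hlt : f i < (g i).length := by
      have := hs i
      exact (List.getElem?_eq_some_iff.1 this).1
    rw [hsub i (f i) hlt]; exact hs i

theorem matchWeight_shift {g : Fin k → List α} {M' : List (Fin k → ℕ)} (o : Fin k → ℕ) (i : Fin k)
    (hsub : ∀ q < (g i).length, (T i)[o i + q]? = (g i)[q]?)
    (hM : IsMatching g M') :
    matchWeight w T i (M'.map (fun f i => o i + f i)) = matchWeight w g i M' := by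
  unfold matchWeight
  rw [List.map_map]
  congr 1
  apply List.map_congr_left
  intro f hf
  obtain ⟨s, hs⟩ := hM.2 f hf
  have hlt : f i < (g i).length := (List.getElem?_eq_some_iff.1 (hs i)).1
  simp only [Function.comp]
  rw [List.getD_eq_getElem?_getD, List.getD_eq_getElem?_getD, hsub (f i) hlt]

/-- concatenation of a sequence of blocks -/
def chainBlocks {β : Type*} (B : ℕ → List β) : ℕ → List β
  | 0 => []
  | m + 1 => chainBlocks B m ++ B m

theorem mem_chainBlocks {β : Type*} {B : ℕ → List β} {N : ℕ} {x : β} :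
    x ∈ chainBlocks B N ↔ ∃ m < N, x ∈ B m := by
  induction N with
  | zero => simp [chainBlocks]
  | succ N ih =>
    simp only [chainBlocks, List.mem_append, ih]
    constructor
    · rintro (⟨m, hm, hx⟩ | hx)
      · exact ⟨m, by omega, hx⟩
      · exact ⟨N, by omega, hx⟩
    · rintro ⟨m, hm, hx⟩
      rcases Nat.lt_succ_iff_lt_or_eq.1 hm with h | rfl
      · exact Or.inl ⟨m, h, hx⟩
      · exact Or.inr hx

theorem isMatching_chainBlocks {B : ℕ → List (Fin k → ℕ)} {N : ℕ}
    (hm : ∀ m < N, IsMatching T (B m))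
    (hsep : ∀ m < N, ∀ m' < N, m < m' → ∀ a ∈ B m, ∀ b ∈ B m', ∀ i, a i < b i) :
    IsMatching T (chainBlocks B N) := by
  induction N with
  | zero => exact isMatching_nil
  | succ N ih =>
    refine isMatching_append (ih (fun m hmN => hm m (by omega))
      (fun m h1 m' h2 h3 => hsep m (by omega) m' (by omega) h3)) (hm N (by omega)) ?_
    intro a ha b hb i
    obtain ⟨m, hmN, hma⟩ := mem_chainBlocks.1 ha
    exact hsep m (by omega) N (by omega) hmN a hma b hb i

theorem matchWeight_chainBlocks {B : ℕ → List (Fin k → ℕ)} (i : Fin k) (N : ℕ) :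
    matchWeight w T i (chainBlocks B N) = ∑ m ∈ Finset.range N, matchWeight w T i (B m) := by
  induction N with
  | zero => simp [chainBlocks, matchWeight]
  | succ N ih => rw [chainBlocks, matchWeight_append, ih, Finset.sum_range_succ]

end Generic

namespace SelLB

theorem sum_map_range (g : ℕ → ℕ) (m : ℕ) :
    ((List.range m).map g).sum = ∑ j ∈ Finset.range m, g j := by
  induction m with
  | zero => simp
  | succ m ih =>
    rw [List.range_succ, List.map_append, List.sum_append, Finset.sum_range_succ, ih]; simp

section lists
variable {α : Type*}

theorem length_padBlock (pad : ℕ → α) (a b : ℕ) : (padBlock pad a b).length = b + 1 - a := by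
  simp [padBlock]

theorem getElem?_padBlock (pad : ℕ → α) (a b d : ℕ) (h : d < b + 1 - a) :
    (padBlock pad a b)[d]? = some (pad (a + d)) := by
  unfold padBlock
  rw [List.getElem?_map, List.getElem?_range' h]
  simp

theorem length_rep (m : ℕ) (l : List α) : (rep m l).length = m * l.length := by
  simp [rep, List.length_flatten, List.map_replicate, List.sum_replicate, smul_eq_mul]

theorem rep_succ (m : ℕ) (l : List α) : rep (m+1) l = l ++ rep m l := by
  simp [rep, List.replicate_succ]

theorem getElem?_rep (m : ℕ) (l : List α) (p d : ℕ) (hp : p < m) (hd : d < l.length) :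
    (rep m l)[p * l.length + d]? = l[d]? := by
  induction m generalizing p with
  | zero => omega
  | succ m ih =>
    rw [rep_succ]
    cases p with
    | zero =>
      simp only [Nat.zero_mul, Nat.zero_add]
      rw [List.getElem?_append]
      simp [hd]
    | succ p =>
      have h1 : (p+1) * l.length + d = l.length + (p * l.length + d) := by ring
      rw [h1, List.getElem?_append_right (by omega), Nat.add_sub_cancel_left]
      exact ih p (by omega)

theorem getElem?_flatten_range (f : ℕ → List α) (N m q : ℕ) (hm : m < N)
    (hq : q < (f m).length) :
    ((List.range N).map f).flatten[(∑ j ∈ Finset.range m, (f j).length) + q]? = (f m)[q]? := by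
  have hA : ((List.range m).map f).flatten.length = ∑ j ∈ Finset.range m, (f j).length := by
    rw [List.length_flatten, List.map_map]; exact sum_map_range _ m
  have hN : N = (m + 1) + (N - m - 1) := by omega
  rw [hN, List.range_add, List.map_append, List.flatten_append, List.range_succ,
    List.map_append, List.flatten_append, List.append_assoc,
    List.getElem?_append_right (by omega)]
  have hsub : ∑ j ∈ Finset.range m, (f j).length + q - ((List.range m).map f).flatten.length
      = q := by omega
  rw [hsub]
  simp only [List.map_cons, List.map_nil, List.flatten_cons, List.flatten_nil, List.append_nil]
  rw [List.getElem?_append]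
  simp [hq]

theorem length_decorate (c0 c2 : α) (pad : ℕ → α) (ii : ℕ) (hii : 1 ≤ ii) (v : List α) :
    (decorate c0 c2 pad ii v).length = v.length + ii + 1 := by
  simp [decorate, length_padBlock]; omega

theorem getElem?_decorate_c0 (c0 c2 : α) (pad : ℕ → α) (ii : ℕ) (v : List α) :
    (decorate c0 c2 pad ii v)[0]? = some c0 := by simp [decorate]

theorem getElem?_decorate_v (c0 c2 : α) (pad : ℕ → α) (ii : ℕ) (v : List α)
    (q : ℕ) (hq : q < v.length) :
    (decorate c0 c2 pad ii v)[1 + q]? = v[q]? := by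
  unfold decorate
  rw [List.getElem?_append, if_pos (by simp; omega), Nat.add_comm 1 q]
  simp only [List.getElem?_cons_succ]

theorem getElem?_decorate_c2 (c0 c2 : α) (pad : ℕ → α) (ii : ℕ) (v : List α) :
    (decorate c0 c2 pad ii v)[v.length + 1]? = some c2 := by
  unfold decorate
  rw [List.getElem?_append_right (by simp)]
  simp

theorem getElem?_decorate_pad (c0 c2 : α) (pad : ℕ → α) (ii : ℕ) (v : List α)
    (d : ℕ) (hd : d < ii - 1) :
    (decorate c0 c2 pad ii v)[v.length + 2 + d]? = some (pad (2 + d)) := by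
  unfold decorate
  rw [List.getElem?_append_right (by simp; omega)]
  have h2 : v.length + 2 + d - (c0 :: v).length = d + 1 := by simp; omega
  rw [h2]
  simp only [List.getElem?_cons_succ]
  exact getElem?_padBlock pad 2 ii d (by omega)

theorem getElem?_decorate_pad' (c0 c2 : α) (pad : ℕ → α) (ii : ℕ) (v : List α)
    (j : ℕ) (h2 : 2 ≤ j) (hj : j < ii + 1) :
    (decorate c0 c2 pad ii v)[v.length + j]? = some (pad j) := by
  have h := getElem?_decorate_pad c0 c2 pad ii v (j-2) (by omega)
  rw [show v.length + 2 + (j-2) = v.length + j from by omega,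
    show 2 + (j-2) = j from by omega] at h
  exact h

theorem flatten_map_const {γ : Type*} (g : γ → List α) (l : List γ) (d : List α)
    (h : ∀ x ∈ l, g x = d) : (l.map g).flatten = rep l.length d := by
  rw [rep]
  congr 1
  rw [List.eq_replicate_iff]
  refine ⟨by simp, ?_⟩
  intro b hb
  simp only [List.mem_map] at hb
  obtain ⟨x, hx, rfl⟩ := hb
  exact h x hx

end lists

section strings
variable {α : Type*} (k n : ℕ) (c0 c2 : α) (pad : ℕ → α)
  (VG : ℕ → Fin n → List α) (VGf : ℕ → List α) (Q : ℕ)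

/-- the gadget (real or filler) sitting in slot `m` of string `i1+1`. -/
def gadStr (i1 m : ℕ) : List α :=
  if h : i1 * n ≤ m ∧ m < i1 * n + n then VG (i1+1) ⟨m - i1*n, by omega⟩ else VGf (i1+1)

/-- start position of decoration `m` in string `i1+1`. -/
def offs (i1 m : ℕ) : ℕ :=
  Q * (k - 1 - i1) + i1 +
    ∑ m' ∈ Finset.range m, ((gadStr n VG VGf i1 m').length + i1 + 2)

theorem offs_succ (i1 m : ℕ) :
    offs k n VG VGf Q i1 (m+1)
      = offs k n VG VGf Q i1 m + ((gadStr n VG VGf i1 m).length + i1 + 2) := by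
  unfold offs
  rw [Finset.sum_range_succ]; ring

theorem offs_mono (i1 : ℕ) {m m' : ℕ} (h : m ≤ m') :
    offs k n VG VGf Q i1 m ≤ offs k n VG VGf Q i1 m' := by
  unfold offs
  exact Nat.add_le_add_left (Finset.sum_le_sum_of_subset (Finset.range_subset_range.2 h)) _

theorem offs_ge (i1 m : ℕ) :
    Q * (k - 1 - i1) + i1 ≤ offs k n VG VGf Q i1 m := Nat.le_add_right _ _

theorem mid_eq (i1 : ℕ) :
    ((List.range ((2*i1+1)*n)).map
        (fun m => decorate c0 c2 pad (i1+1) (gadStr n VG VGf i1 m))).flatten =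
      rep (i1*n) (decorate c0 c2 pad (i1+1) (VGf (i1+1))) ++
      (((List.finRange n).map fun t => decorate c0 c2 pad (i1+1) (VG (i1+1) t)).flatten ++
      rep (i1*n) (decorate c0 c2 pad (i1+1) (VGf (i1+1)))) := by
  have hsplit : (2*i1+1)*n = i1*n + (n + i1*n) := by ring
  rw [hsplit]
  simp only [List.range_add, List.map_append, List.map_map, List.flatten_append]
  congr 1
  · rw [flatten_map_const _ _ (decorate c0 c2 pad (i1+1) (VGf (i1+1))) ?_, List.length_range]
    intro x hx
    simp only [List.mem_range] at hx
    unfold gadStr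
    rw [dif_neg (by omega)]
  congr 1
  · congr 1
    apply List.ext_getElem (by simp)
    intro j h1 h2
    have hj : j < n := by simpa using h2
    simp only [List.getElem_map, List.getElem_range, List.getElem_finRange,
      Function.comp_apply]
    unfold gadStr
    rw [dif_pos ⟨Nat.le_add_right _ _, by omega⟩]
    congr 2
    apply Fin.ext
    simp only [Fin.coe_cast, Fin.val_mk]
    omega
  · rw [flatten_map_const _ _ (decorate c0 c2 pad (i1+1) (VGf (i1+1))) ?_, List.length_range]
    intro x hx
    simp only [List.mem_range] at hx
    simp only [Function.comp_apply]
    unfold gadStr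
    rw [dif_neg (by omega)]

theorem selString_eq (i1 : ℕ) :
    selString k n c0 c2 pad VG VGf Q (i1+1) =
      rep Q (padBlock pad (i1+2) k) ++ (padBlock pad 2 (i1+1) ++
      (((List.range ((2*i1+1)*n)).map
          (fun m => decorate c0 c2 pad (i1+1) (gadStr n VG VGf i1 m))).flatten ++
      rep Q (padBlock pad (i1+2) k))) := by
  rw [selString, mid_eq, Nat.add_sub_cancel]
  simp [List.append_assoc]


theorem length_rep_padBlock (i1 : ℕ) (hi : i1 < k) :
    (rep Q (padBlock pad (i1+2) k) : List α).length = Q * (k - 1 - i1) := by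
  rw [length_rep, length_padBlock]
  congr 1
  omega

theorem length_header (i1 : ℕ) :
    (padBlock pad 2 (i1+1) : List α).length = i1 := by
  rw [length_padBlock]; omega

theorem length_dec (i1 j : ℕ) :
    ((decorate c0 c2 pad (i1+1) (gadStr n VG VGf i1 j)) : List α).length
      = (gadStr n VG VGf i1 j).length + i1 + 2 := by
  rw [length_decorate _ _ _ _ (by omega)]
  omega

theorem length_mid (i1 : ℕ) :
    (((List.range ((2*i1+1)*n)).map
        (fun m => decorate c0 c2 pad (i1+1) (gadStr n VG VGf i1 m))).flatten : List α).length
      = ∑ j ∈ Finset.range ((2*i1+1)*n), ((gadStr n VG VGf i1 j).length + i1 + 2) := by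
  rw [List.length_flatten, List.map_map, sum_map_range]
  exact Finset.sum_congr rfl (fun j _ => by simp [Function.comp, length_dec])

theorem getElem?_sel_prefix (i1 p d : ℕ) (hi : i1 < k) (hp : p < Q) (hd : d < k - 1 - i1) :
    (selString k n c0 c2 pad VG VGf Q (i1+1))[p * (k - 1 - i1) + d]?
      = some (pad (i1 + 2 + d)) := by
  rw [selString_eq, List.getElem?_append]
  have h1 : p * (k-1-i1) + d < (p+1) * (k-1-i1) := by simp [Nat.add_mul]; omega
  have h2 : (p+1) * (k-1-i1) ≤ Q * (k-1-i1) := Nat.mul_le_mul_right _ (by omega)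
  rw [if_pos (by rw [length_rep_padBlock (k := k) (pad := pad) (Q := Q) i1 hi]; omega)]
  have hpb : (padBlock pad (i1+2) k : List α).length = k - 1 - i1 := by
    rw [length_padBlock]; omega
  have := getElem?_rep Q (padBlock pad (i1+2) k : List α) p d hp (by rw [hpb]; exact hd)
  rw [hpb] at this
  rw [this]
  exact getElem?_padBlock pad (i1+2) k d (by omega)

theorem getElem?_sel_header (i1 d : ℕ) (hi : i1 < k) (hd : d < i1) :
    (selString k n c0 c2 pad VG VGf Q (i1+1))[Q * (k - 1 - i1) + d]?
      = some (pad (2 + d)) := by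
  rw [selString_eq,
    List.getElem?_append_right (by rw [length_rep_padBlock (k := k) (pad := pad) (Q := Q) i1 hi]; omega)]
  have e1 : Q * (k-1-i1) + d - (rep Q (padBlock pad (i1+2) k) : List α).length = d := by
    rw [length_rep_padBlock (k := k) (pad := pad) (Q := Q) i1 hi]; omega
  rw [e1, List.getElem?_append, if_pos (by rw [length_header (pad := pad) i1]; omega)]
  exact getElem?_padBlock pad 2 (i1+1) d (by omega)

theorem getElem?_sel_mid (i1 m q : ℕ) (hi : i1 < k) (hm : m < (2*i1+1)*n)
    (hq : q < (gadStr n VG VGf i1 m).length + i1 + 2) :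
    (selString k n c0 c2 pad VG VGf Q (i1+1))[offs k n VG VGf Q i1 m + q]?
      = (decorate c0 c2 pad (i1+1) (gadStr n VG VGf i1 m))[q]? := by
  have hoffs : offs k n VG VGf Q i1 m = Q * (k-1-i1) + i1 +
      ∑ m' ∈ Finset.range m, ((gadStr n VG VGf i1 m').length + i1 + 2) := rfl
  have hsum : ∑ m' ∈ Finset.range m, ((gadStr n VG VGf i1 m').length + i1 + 2)
      = ∑ m' ∈ Finset.range m,
          ((decorate c0 c2 pad (i1+1) (gadStr n VG VGf i1 m')).length) :=
    Finset.sum_congr rfl (fun j _ => (length_dec n c0 c2 pad VG VGf i1 j).symm)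
  have hsumle : ∑ m' ∈ Finset.range (m+1), ((gadStr n VG VGf i1 m').length + i1 + 2)
      ≤ ∑ m' ∈ Finset.range ((2*i1+1)*n), ((gadStr n VG VGf i1 m').length + i1 + 2) :=
    Finset.sum_le_sum_of_subset (Finset.range_subset_range.2 (by omega))
  have hsucc := Finset.sum_range_succ
    (fun m' => ((gadStr n VG VGf (α := α) i1 m').length + i1 + 2)) m
  rw [selString_eq,
    List.getElem?_append_right (by rw [length_rep_padBlock (k := k) (pad := pad) (Q := Q) i1 hi, hoffs]; omega)]
  have e1 : offs k n VG VGf Q i1 m + q - (rep Q (padBlock pad (i1+2) k) : List α).length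
      = i1 + (∑ m' ∈ Finset.range m, ((gadStr n VG VGf i1 m').length + i1 + 2) + q) := by
    rw [length_rep_padBlock (k := k) (pad := pad) (Q := Q) i1 hi, hoffs]; omega
  rw [e1, List.getElem?_append_right (by rw [length_header (pad := pad) i1]; omega)]
  have e2 : i1 + (∑ m' ∈ Finset.range m, ((gadStr n VG VGf i1 m').length + i1 + 2) + q)
        - (padBlock pad 2 (i1+1) : List α).length
      = ∑ m' ∈ Finset.range m, ((gadStr n VG VGf i1 m').length + i1 + 2) + q := by
    rw [length_header (pad := pad) i1]; omega
  rw [e2, List.getElem?_append,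
    if_pos (by rw [length_mid n c0 c2 pad VG VGf i1]; omega)]
  rw [hsum]
  exact getElem?_flatten_range _ ((2*i1+1)*n) m q hm
    (by rw [length_dec n c0 c2 pad VG VGf i1 m]; omega)

theorem getElem?_sel_suffix (i1 p d : ℕ) (hi : i1 < k) (hp : p < Q) (hd : d < k - 1 - i1) :
    (selString k n c0 c2 pad VG VGf Q (i1+1))[offs k n VG VGf Q i1 ((2*i1+1)*n)
        + (p * (k - 1 - i1) + d)]?
      = some (pad (i1 + 2 + d)) := by
  have hoffs : offs k n VG VGf Q i1 ((2*i1+1)*n) = Q * (k-1-i1) + i1 +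
      ∑ m' ∈ Finset.range ((2*i1+1)*n), ((gadStr n VG VGf i1 m').length + i1 + 2) := rfl
  rw [selString_eq,
    List.getElem?_append_right (by rw [length_rep_padBlock (k := k) (pad := pad) (Q := Q) i1 hi, hoffs]; omega)]
  have e1 : offs k n VG VGf Q i1 ((2*i1+1)*n) + (p * (k-1-i1) + d)
        - (rep Q (padBlock pad (i1+2) k) : List α).length
      = i1 + (∑ m' ∈ Finset.range ((2*i1+1)*n), ((gadStr n VG VGf i1 m').length + i1 + 2)
          + (p * (k-1-i1) + d)) := by
    rw [length_rep_padBlock (k := k) (pad := pad) (Q := Q) i1 hi, hoffs]; omega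
  rw [e1, List.getElem?_append_right (by rw [length_header (pad := pad) i1]; omega)]
  have e2 : i1 + (∑ m' ∈ Finset.range ((2*i1+1)*n), ((gadStr n VG VGf i1 m').length + i1 + 2)
        + (p * (k-1-i1) + d)) - (padBlock pad 2 (i1+1) : List α).length
      = ∑ m' ∈ Finset.range ((2*i1+1)*n), ((gadStr n VG VGf i1 m').length + i1 + 2)
          + (p * (k-1-i1) + d) := by
    rw [length_header (pad := pad) i1]; omega
  rw [e2, List.getElem?_append_right (by rw [length_mid n c0 c2 pad VG VGf i1]; omega)]
  have e3 : ∑ m' ∈ Finset.range ((2*i1+1)*n), ((gadStr n VG VGf i1 m').length + i1 + 2)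
        + (p * (k-1-i1) + d)
        - (((List.range ((2*i1+1)*n)).map
            (fun m => decorate c0 c2 pad (i1+1) (gadStr n VG VGf i1 m))).flatten : List α).length
      = p * (k-1-i1) + d := by
    rw [length_mid n c0 c2 pad VG VGf i1]; omega
  rw [e3]
  have hpb : (padBlock pad (i1+2) k : List α).length = k - 1 - i1 := by
    rw [length_padBlock]; omega
  have := getElem?_rep Q (padBlock pad (i1+2) k : List α) p d hp (by rw [hpb]; exact hd)
  rw [hpb] at this
  rw [this]
  exact getElem?_padBlock pad (i1+2) k d (by omega)

theorem length_selString_zero (hk : 2 ≤ k) (hn : 1 ≤ n) :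
    k * n + k ≤ (selString k n c0 c2 pad VG VGf 0 k).length := by
  have hrw : k = (k-1) + 1 := by omega
  have h1 : (rep ((k-1)*n) (decorate c0 c2 pad k (VGf k)) : List α).length
      = (k-1)*n * ((VGf k).length + k + 1) := by
    rw [length_rep, length_decorate _ _ _ _ (by omega)]
  simp only [selString, List.length_append, length_rep, length_padBlock, h1]
  rw [show k+1-2 = k-1 from by omega]
  have h2 : (k-1)*n*(k+1) ≤ (k-1)*n * ((VGf k).length + k + 1) :=
    Nat.mul_le_mul_left _ (by omega)
  have h4 : n*(k+1) ≤ (k-1)*n*(k+1) :=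
    Nat.mul_le_mul_right _ (Nat.le_mul_of_pos_left n (by omega))
  have hnk : 1 ≤ n*k := Nat.one_le_iff_ne_zero.2 (by positivity)
  have h6 : k*n + 1 ≤ 2*(n*(k+1)) := by nlinarith
  have h9 : k ≤ k-1+1 := by omega
  linarith

end strings
end SelLB

namespace SelLB

section main
variable {α : Type*} {k n : ℕ}

/-- the `j`-th selected coordinate, paper indexing (`tf t j = t_j`, `j ∈ [1,k]`). -/
def tf (t : Fin k → Fin n) (j : ℕ) : ℕ :=
  if h : j - 1 < k then (t ⟨j - 1, h⟩ : ℕ) else 0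

theorem tf_lt (t : Fin k → Fin n) (hn : 1 ≤ n) (j : ℕ) : tf t j < n := by
  unfold tf; split
  · exact (t _).2
  · omega

/-- cumulative number of "before" pad events for symbols `k, k-1, …, j`. -/
def CBf (t : Fin k → Fin n) : ℕ → ℕ
  | 0 => 0
  | 1 => 0
  | (jj+2) => CBf t (jj+1) + ((n + tf t (jj+2)) - tf t (jj+1)) + (if jj = 0 then 1 else 0)

/-- cumulative number of "after" pad events for symbols `2, 3, …, j`. -/
def DBf (t : Fin k → Fin n) : ℕ → ℕ
  | 0 => 0
  | 1 => 0
  | (jj+2) => DBf t (jj+1) + (((n+1) + tf t (jj+1)) - tf t (jj+2))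

/-- index of the first window slot in string `i`. -/
def sIdx (t : Fin k → Fin n) (i : Fin k) : ℕ := (i.1 * n + tf t (i.1+1)) - tf t 1

theorem CBf_mono (t : Fin k → Fin n) : Monotone (CBf t) := by
  apply monotone_nat_of_le_succ
  intro b
  match b with
  | 0 => simp [CBf]
  | 1 => simp [CBf]
  | (jj+1) => show CBf t (jj+1) ≤ CBf t (jj+2); rw [CBf]; omega

theorem DBf_mono (t : Fin k → Fin n) : Monotone (DBf t) := by
  apply monotone_nat_of_le_succ
  intro b
  match b with
  | 0 => simp [DBf]
  | 1 => simp [DBf]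
  | (jj+1) => show DBf t (jj+1) ≤ DBf t (jj+2); rw [DBf]; omega

theorem CBf_closed (t : Fin k → Fin n) (hn : 1 ≤ n) (jj : ℕ) :
    CBf t (jj+2) + tf t 1 = 1 + jj*n + n + tf t (jj+2) := by
  induction jj with
  | zero =>
    have h1 := tf_lt t hn 1
    have h2 := tf_lt t hn 2
    simp only [CBf]
    norm_num
    omega
  | succ jj ih =>
    have h1 := tf_lt t hn (jj+2)
    have h2 := tf_lt t hn (jj+3)
    have hr : (jj+1)*n = jj*n + n := by ring
    rw [CBf, show jj+1+1 = jj+2 from rfl, show jj+1+2 = jj+3 from rfl]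
    simp only [if_neg (Nat.succ_ne_zero jj)]
    omega

theorem DBf_closed (t : Fin k → Fin n) (hn : 1 ≤ n) (jj : ℕ) :
    DBf t (jj+2) + tf t (jj+2) = jj*(n+1) + (n+1) + tf t 1 := by
  induction jj with
  | zero =>
    have h1 := tf_lt t hn 1
    have h2 := tf_lt t hn 2
    simp only [DBf]
    norm_num
    omega
  | succ jj ih =>
    have h1 := tf_lt t hn (jj+2)
    have h2 := tf_lt t hn (jj+3)
    have hr : (jj+1)*(n+1) = jj*(n+1) + (n+1) := by ring
    rw [DBf, show jj+1+1 = jj+2 from rfl, show jj+1+2 = jj+3 from rfl]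
    omega

theorem DBf_gap (t : Fin k → Fin n) (hn : 1 ≤ n) (a b : ℕ) (ha : 1 ≤ a) (hab : a ≤ b) :
    DBf t a + 2*(b-a) ≤ DBf t b := by
  induction b with
  | zero => omega
  | succ b ih =>
    rcases Nat.lt_or_ge a (b+1) with h | h
    · have hb : 1 ≤ b := by omega
      have := ih (by omega)
      have hstep : DBf t b + 2 ≤ DBf t (b+1) := by
        match b, hb with
        | (jj+1), _ =>
          rw [show jj+1+1 = jj+2 from rfl, DBf, show jj+1+1 = jj+2 from rfl]
          have h2 := tf_lt t hn (jj+2)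
          omega
      omega
    · have : a = b+1 := by omega
      subst this
      simp

theorem DBf_lb (t : Fin k → Fin n) (hn : 1 ≤ n) (j : ℕ) (h2 : 2 ≤ j) :
    j - 1 ≤ DBf t j := by
  obtain ⟨jj, rfl⟩ : ∃ jj, j = jj+2 := ⟨j-2, by omega⟩
  have hD2 : 1 ≤ DBf t 2 := by
    have h := DBf_closed t hn 0
    have h2 := tf_lt t hn 2
    norm_num at h
    omega
  have hgap := DBf_gap t hn 2 (jj+2) (by omega) (by omega)
  omega

theorem sIdx_add (t : Fin k → Fin n) (hn : 1 ≤ n) (i : Fin k) :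
    sIdx t i + tf t 1 = i.1 * n + tf t (i.1+1) := by
  unfold sIdx
  rcases Nat.eq_zero_or_pos i.1 with h | h
  · simp [h]
  · have : n ≤ i.1 * n := Nat.le_mul_of_pos_left n h
    have := tf_lt t hn 1
    omega

theorem sIdx_lt (t : Fin k → Fin n) (hn : 1 ≤ n) (i : Fin k) :
    sIdx t i + n ≤ (2*i.1+1)*n + tf t 1 := by
  have h := sIdx_add t hn i
  have h2 := tf_lt t hn (i.1+1)
  have hr : (2*i.1+1)*n = i.1*n + i.1*n + n := by ring
  rcases Nat.eq_zero_or_pos i.1 with h0 | h0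
  · simp only [h0] at h h2 hr ⊢
    norm_num at h h2 hr ⊢
    omega
  · have h3 : n ≤ i.1 * n := Nat.le_mul_of_pos_left n h0
    omega

/-- positions of the "before" pad events. -/
def posPre (VG : ℕ → Fin n → List α) (VGf : ℕ → List α) (Q : ℕ) (t : Fin k → Fin n)
    (i : Fin k) (e j : ℕ) : ℕ :=
  if i.1 + 2 ≤ j then e * (k - 1 - i.1) + (j - (i.1 + 2))
  else if e = CBf t k - CBf t (i.1+1) then Q * (k - 1 - i.1) + (j - 2)
  else offs k n VG VGf Q i.1 ((e - (CBf t k - CBf t (i.1+1))) - 1)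
        + ((gadStr n VG VGf i.1 ((e - (CBf t k - CBf t (i.1+1))) - 1)).length + j)

/-- positions of the "after" pad events. -/
def posPost (VG : ℕ → Fin n → List α) (VGf : ℕ → List α) (Q : ℕ) (t : Fin k → Fin n)
    (i : Fin k) (e j : ℕ) : ℕ :=
  if i.1 + 2 ≤ j then
    offs k n VG VGf Q i.1 ((2*i.1+1)*n) + (e * (k - 1 - i.1) + (j - (i.1 + 2)))
  else offs k n VG VGf Q i.1 (sIdx t i + n - 1 + (e - (j - 2)))
        + ((gadStr n VG VGf i.1 (sIdx t i + n - 1 + (e - (j - 2)))).length + j)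

theorem sIdx_le (t : Fin k → Fin n) (hn : 1 ≤ n) (i : Fin k) :
    sIdx t i + n ≤ (2*i.1+1)*n := by
  have h2 := tf_lt t hn (i.1+1)
  have h1 := tf_lt t hn 1
  rcases Nat.eq_zero_or_pos i.1 with h0 | h0
  · unfold sIdx
    simp only [h0]
    norm_num
  · have hsi := sIdx_add t hn i
    have hexp : (2*i.1+1)*n = i.1*n + i.1*n + n := by ring
    have h3 : n ≤ i.1 * n := Nat.le_mul_of_pos_left n h0
    omega


theorem slot_lt (t : Fin k → Fin n) (hn : 1 ≤ n) (i : Fin k) (u : ℕ) (hu : u < n) :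
    sIdx t i + u < (2*i.1+1)*n := by
  have := sIdx_le t hn i; omega

theorem gad_opts (VG : ℕ → Fin n → List α) (VGf : ℕ → List α) (i : Fin k) (m : ℕ) :
    gadStr n VG VGf i.1 m = VGf (i.1+1) ∨
      ∃ r : Fin n, gadStr n VG VGf i.1 m = VG (i.1+1) r := by
  unfold gadStr
  split
  · exact Or.inr ⟨_, rfl⟩
  · exact Or.inl rfl

theorem tf_eta (t : Fin k → Fin n) (i : Fin k) : tf t (i.1+1) = (t i : ℕ) := by
  unfold tf
  rw [dif_pos (show i.1+1-1 < k from by have := i.2; omega)]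
  have hfin : (⟨i.1+1-1, show i.1+1-1 < k from by have := i.2; omega⟩ : Fin k) = i :=
    Fin.ext (by simp only [Fin.val_mk]; omega)
  rw [hfin]

theorem gad_far (VG : ℕ → Fin n → List α) (VGf : ℕ → List α) (t : Fin k → Fin n)
    (hn : 1 ≤ n) (i : Fin k) :
    gadStr n VG VGf i.1 (sIdx t i + tf t 1) = VG (i.1+1) (t i) := by
  rw [sIdx_add t hn i]
  unfold gadStr
  rw [dif_pos ⟨Nat.le_add_right _ _, by have := tf_lt t hn (i.1+1); omega⟩]
  congr 1
  apply Fin.ext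
  have h := tf_eta t i
  simp only [Fin.val_mk]
  omega

section posLemmas
variable (c0 c2 : α) (pad : ℕ → α) (VG : ℕ → Fin n → List α) (VGf : ℕ → List α)
  (Q : ℕ) (t : Fin k → Fin n)

theorem preSym (hn : 1 ≤ n) (hQB : CBf t k ≤ Q) (i : Fin k) (e j : ℕ)
    (h2 : 2 ≤ j) (hjk : j ≤ k)
    (he1 : CBf t k - CBf t j ≤ e) (he2 : e < CBf t k - CBf t (j-1)) :
    (selString k n c0 c2 pad VG VGf Q (i.1+1))[posPre VG VGf Q t i e j]?
      = some (pad j) := by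
  have hik : i.1 < k := i.2
  have hCk : CBf t (j-1) ≤ CBf t j := CBf_mono t (by omega)
  have hCjk : CBf t j ≤ CBf t k := CBf_mono t hjk
  unfold posPre
  by_cases hij : i.1 + 2 ≤ j
  · rw [if_pos hij]
    have h := getElem?_sel_prefix k n c0 c2 pad VG VGf Q i.1 e (j - (i.1+2)) hik
      (by omega) (by omega)
    rw [show i.1 + 2 + (j - (i.1+2)) = j from by omega] at h
    exact h
  · rw [if_neg hij]
    have hi1 : 1 ≤ i.1 := by omega
    obtain ⟨a, ha⟩ : ∃ a, i.1 = a + 1 := ⟨i.1 - 1, by omega⟩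
    have hCi : CBf t (i.1+1) + tf t 1 = 1 + a*n + n + tf t (i.1+1) := by
      have h := CBf_closed t hn a
      rw [show a + 2 = i.1 + 1 from by omega] at h
      exact h
    have hsi := sIdx_add t hn i
    have hin : i.1*n = a*n + n := by rw [ha]; ring
    have htf1 := tf_lt t hn 1
    have htfi := tf_lt t hn (i.1+1)
    have hCji : CBf t j ≤ CBf t (i.1+1) := CBf_mono t (by omega)
    by_cases hl0 : e = CBf t k - CBf t (i.1+1)
    · rw [if_pos hl0]
      have h := getElem?_sel_header k n c0 c2 pad VG VGf Q i.1 (j-2) hik (by omega)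
      rw [show 2 + (j-2) = j from by omega] at h
      exact h
    · rw [if_neg hl0]
      have hl1 : 1 ≤ e - (CBf t k - CBf t (i.1+1)) := by omega
      have hll : e - (CBf t k - CBf t (i.1+1)) ≤ sIdx t i := by omega
      have hexp : (2*i.1+1)*n = i.1*n + i.1*n + n := by ring
      have hm : e - (CBf t k - CBf t (i.1+1)) - 1 < (2*i.1+1)*n := by omega
      have h := getElem?_sel_mid k n c0 c2 pad VG VGf Q i.1
        (e - (CBf t k - CBf t (i.1+1)) - 1)
        ((gadStr n VG VGf i.1 (e - (CBf t k - CBf t (i.1+1)) - 1)).length + j)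
        hik hm (by omega)
      rw [h]
      exact getElem?_decorate_pad' c0 c2 pad (i.1+1) _ j h2 (by omega)

theorem preMono (hn : 1 ≤ n) (hQB : CBf t k ≤ Q) (i : Fin k) (e j e' j' : ℕ)
    (h2 : 2 ≤ j') (hj'j : j' ≤ j) (hjk : j ≤ k)
    (he1 : CBf t k - CBf t j ≤ e) (he2 : e < CBf t k - CBf t (j-1))
    (he1' : CBf t k - CBf t j' ≤ e') (hee : e < e') :
    posPre VG VGf Q t i e j < posPre VG VGf Q t i e' j' := by
  have hik : i.1 < k := i.2
  have hCk : CBf t (j-1) ≤ CBf t j := CBf_mono t (by omega)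
  have hCjk : CBf t j ≤ CBf t k := CBf_mono t hjk
  have hCj'j : CBf t j' ≤ CBf t (j-1) ∨ j' = j := by
    rcases eq_or_lt_of_le hj'j with h | h
    · exact Or.inr h
    · exact Or.inl (CBf_mono t (by omega))
  unfold posPre
  by_cases hij' : i.1 + 2 ≤ j'
  · have hij : i.1 + 2 ≤ j := by omega
    rw [if_pos hij, if_pos hij']
    have hK : 1 ≤ k - 1 - i.1 := by omega
    have hd : j - (i.1+2) < k - 1 - i.1 := by omega
    have hmul : (e+1) * (k-1-i.1) ≤ e' * (k-1-i.1) := Nat.mul_le_mul_right _ (by omega)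
    have hr : (e+1)*(k-1-i.1) = e*(k-1-i.1) + (k-1-i.1) := by ring
    omega
  · rw [if_neg hij']
    have hi1 : 1 ≤ i.1 := by omega
    obtain ⟨a, ha⟩ : ∃ a, i.1 = a + 1 := ⟨i.1 - 1, by omega⟩
    have hCi : CBf t (i.1+1) + tf t 1 = 1 + a*n + n + tf t (i.1+1) := by
      have h := CBf_closed t hn a
      rw [show a + 2 = i.1 + 1 from by omega] at h
      exact h
    have hsi := sIdx_add t hn i
    have hin : i.1*n = a*n + n := by rw [ha]; ring
    have htf1 := tf_lt t hn 1
    have htfi := tf_lt t hn (i.1+1)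
    have hCj'i : CBf t j' ≤ CBf t (i.1+1) := CBf_mono t (by omega)
    by_cases hij : i.1 + 2 ≤ j
    · -- left high, right low
      rw [if_pos hij]
      have hK : 1 ≤ k - 1 - i.1 := by omega
      have hd : j - (i.1+2) < k - 1 - i.1 := by omega
      have hmul : (e+1) * (k-1-i.1) ≤ Q * (k-1-i.1) := Nat.mul_le_mul_right _ (by omega)
      have hr : (e+1)*(k-1-i.1) = e*(k-1-i.1) + (k-1-i.1) := by ring
      by_cases he0 : e' = CBf t k - CBf t (i.1+1)
      · rw [if_pos he0]; omega
      · rw [if_neg he0]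
        have hge := offs_ge k n VG VGf Q i.1 (e' - (CBf t k - CBf t (i.1+1)) - 1)
        omega
    · -- both low
      rw [if_neg hij]
      have hCji : CBf t j ≤ CBf t (i.1+1) := CBf_mono t (by omega)
      by_cases he0 : e = CBf t k - CBf t (i.1+1)
      · rw [if_pos he0]
        by_cases he0' : e' = CBf t k - CBf t (i.1+1)
        · omega
        · rw [if_neg he0']
          have hge := offs_ge k n VG VGf Q i.1 (e' - (CBf t k - CBf t (i.1+1)) - 1)
          omega
      · rw [if_neg he0]
        by_cases he0' : e' = CBf t k - CBf t (i.1+1)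
        · omega
        · rw [if_neg he0']
          have hmm : (e - (CBf t k - CBf t (i.1+1)) - 1) + 1
              ≤ e' - (CBf t k - CBf t (i.1+1)) - 1 := by omega
          have hstep := offs_succ k n VG VGf Q i.1 (e - (CBf t k - CBf t (i.1+1)) - 1)
          have hmono := offs_mono k n VG VGf Q i.1 hmm
          omega

theorem preUB (hn : 1 ≤ n) (hQB : CBf t k ≤ Q) (i : Fin k) (e j : ℕ)
    (h2 : 2 ≤ j) (hjk : j ≤ k)
    (he1 : CBf t k - CBf t j ≤ e) (he2 : e < CBf t k - CBf t (j-1)) :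
    posPre VG VGf Q t i e j < offs k n VG VGf Q i.1 (sIdx t i) := by
  have hik : i.1 < k := i.2
  have hCk : CBf t (j-1) ≤ CBf t j := CBf_mono t (by omega)
  have hCjk : CBf t j ≤ CBf t k := CBf_mono t hjk
  have hge := offs_ge k n VG VGf Q i.1 (sIdx t i)
  unfold posPre
  by_cases hij : i.1 + 2 ≤ j
  · rw [if_pos hij]
    have hK : 1 ≤ k - 1 - i.1 := by omega
    have hd : j - (i.1+2) < k - 1 - i.1 := by omega
    have hmul : (e+1) * (k-1-i.1) ≤ Q * (k-1-i.1) := Nat.mul_le_mul_right _ (by omega)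
    have hr : (e+1)*(k-1-i.1) = e*(k-1-i.1) + (k-1-i.1) := by ring
    omega
  · rw [if_neg hij]
    have hi1 : 1 ≤ i.1 := by omega
    obtain ⟨a, ha⟩ : ∃ a, i.1 = a + 1 := ⟨i.1 - 1, by omega⟩
    have hCi : CBf t (i.1+1) + tf t 1 = 1 + a*n + n + tf t (i.1+1) := by
      have h := CBf_closed t hn a
      rw [show a + 2 = i.1 + 1 from by omega] at h
      exact h
    have hsi := sIdx_add t hn i
    have hin : i.1*n = a*n + n := by rw [ha]; ring
    have htf1 := tf_lt t hn 1
    have htfi := tf_lt t hn (i.1+1)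
    have hCji : CBf t j ≤ CBf t (i.1+1) := CBf_mono t (by omega)
    by_cases he0 : e = CBf t k - CBf t (i.1+1)
    · rw [if_pos he0]; omega
    · rw [if_neg he0]
      have hll : e - (CBf t k - CBf t (i.1+1)) ≤ sIdx t i := by omega
      have hstep := offs_succ k n VG VGf Q i.1 (e - (CBf t k - CBf t (i.1+1)) - 1)
      have hmono := offs_mono k n VG VGf Q i.1
        (show (e - (CBf t k - CBf t (i.1+1)) - 1) + 1 ≤ sIdx t i from by omega)
      omega

/-- capacity bound for the after-pad decoration index. -/
theorem postIdx (hn : 1 ≤ n) (i : Fin k) (e j : ℕ)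
    (h2 : 2 ≤ j) (hji : j ≤ i.1 + 1)
    (he1 : DBf t (j-1) ≤ e) (he2 : e < DBf t j) :
    sIdx t i + n - 1 + (e - (j - 2)) < (2*i.1+1)*n := by
  have hi1 : 1 ≤ i.1 := by omega
  obtain ⟨jj, rfl⟩ : ∃ jj, j = jj + 2 := ⟨j - 2, by omega⟩
  obtain ⟨a, ha⟩ : ∃ a, i.1 = a + 1 := ⟨i.1 - 1, by omega⟩
  have hD := DBf_closed t hn jj
  have hjj : jj*(n+1) = jj*n + jj := by ring
  have hsi := sIdx_add t hn i
  have hia : i.1*n = a*n + n := by rw [ha]; ring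
  have h2ia : (2*i.1+1)*n = i.1*n + i.1*n + n := by ring
  have htf1 := tf_lt t hn 1
  have htfi := tf_lt t hn (i.1+1)
  have htfj := tf_lt t hn (jj+2)
  rcases eq_or_lt_of_le (show jj + 2 ≤ i.1 + 1 from hji) with hcase | hcase
  · have hEq : tf t (i.1+1) = tf t (jj+2) := by rw [show i.1+1 = jj+2 from by omega]
    have hmulA : jj*n ≤ a*n := Nat.mul_le_mul_right n (by omega)
    omega
  · have hmulB : (jj+1)*n ≤ a*n := Nat.mul_le_mul_right n (by omega)
    have hr : (jj+1)*n = jj*n + n := by ring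
    omega

theorem postSym (hn : 1 ≤ n) (hQD : DBf t k ≤ Q) (i : Fin k) (e j : ℕ)
    (h2 : 2 ≤ j) (hjk : j ≤ k)
    (he1 : DBf t (j-1) ≤ e) (he2 : e < DBf t j) :
    (selString k n c0 c2 pad VG VGf Q (i.1+1))[posPost VG VGf Q t i e j]?
      = some (pad j) := by
  have hik : i.1 < k := i.2
  have hDjk : DBf t j ≤ DBf t k := DBf_mono t hjk
  unfold posPost
  by_cases hij : i.1 + 2 ≤ j
  · rw [if_pos hij]
    have h := getElem?_sel_suffix k n c0 c2 pad VG VGf Q i.1 e (j - (i.1+2)) hik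
      (by omega) (by omega)
    rw [show i.1 + 2 + (j - (i.1+2)) = j from by omega] at h
    exact h
  · rw [if_neg hij]
    have hm := postIdx t hn i e j h2 (by omega) he1 he2
    have h := getElem?_sel_mid k n c0 c2 pad VG VGf Q i.1
      (sIdx t i + n - 1 + (e - (j - 2)))
      ((gadStr n VG VGf i.1 (sIdx t i + n - 1 + (e - (j - 2)))).length + j)
      hik hm (by omega)
    rw [h]
    exact getElem?_decorate_pad' c0 c2 pad (i.1+1) _ j h2 (by omega)

theorem postMono (hn : 1 ≤ n) (hQD : DBf t k ≤ Q) (i : Fin k) (e j e' j' : ℕ)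
    (h2 : 2 ≤ j) (hjj' : j ≤ j') (hjk : j' ≤ k)
    (he1 : DBf t (j-1) ≤ e) (he2 : e < DBf t j)
    (he1' : DBf t (j'-1) ≤ e') (he2' : e' < DBf t j') (hee : e < e') :
    posPost VG VGf Q t i e j < posPost VG VGf Q t i e' j' := by
  have hik : i.1 < k := i.2
  have hDj'k : DBf t j' ≤ DBf t k := DBf_mono t hjk
  unfold posPost
  by_cases hij : i.1 + 2 ≤ j
  · have hij' : i.1 + 2 ≤ j' := by omega
    rw [if_pos hij, if_pos hij']
    have hK : 1 ≤ k - 1 - i.1 := by omega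
    have hd : j - (i.1+2) < k - 1 - i.1 := by omega
    have hmul : (e+1) * (k-1-i.1) ≤ e' * (k-1-i.1) := Nat.mul_le_mul_right _ (by omega)
    have hr : (e+1)*(k-1-i.1) = e*(k-1-i.1) + (k-1-i.1) := by ring
    omega
  · rw [if_neg hij]
    have hm := postIdx t hn i e j h2 (by omega) he1 he2
    have hstep := offs_succ k n VG VGf Q i.1 (sIdx t i + n - 1 + (e - (j - 2)))
    by_cases hij' : i.1 + 2 ≤ j'
    · rw [if_pos hij']
      have hmono := offs_mono k n VG VGf Q i.1
        (show sIdx t i + n - 1 + (e - (j-2)) + 1 ≤ (2*i.1+1)*n from by omega)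
      omega
    · rw [if_neg hij']
      have hlb : j - 2 ≤ DBf t (j-1) := by
        rcases Nat.lt_or_ge j 3 with h | h
        · omega
        · have := DBf_lb t hn (j-1) (by omega)
          omega
      rcases eq_or_lt_of_le hjj' with hjeq | hjlt
      · subst hjeq
        have hpp : e - (j - 2) < e' - (j - 2) := by omega
        have hmono := offs_mono k n VG VGf Q i.1
          (show sIdx t i + n - 1 + (e - (j-2)) + 1 ≤ sIdx t i + n - 1 + (e' - (j-2))
            from by omega)
        omega
      · have hgap := DBf_gap t hn j (j'-1) (by omega) (by omega)
        have hlb' : j' - 2 ≤ DBf t (j'-1) := by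
          have := DBf_lb t hn (j'-1) (by omega)
          omega
        rcases eq_or_lt_of_le (show e - (j-2) ≤ e' - (j'-2) from by omega) with hpe | hpe
        · rw [← hpe]
          omega
        · have hmono := offs_mono k n VG VGf Q i.1
            (show sIdx t i + n - 1 + (e - (j-2)) + 1 ≤ sIdx t i + n - 1 + (e' - (j'-2))
              from by omega)
          omega

theorem postLB (hn : 1 ≤ n) (i : Fin k) (e j : ℕ)
    (h2 : 2 ≤ j) (hjk : j ≤ k)
    (he1 : DBf t (j-1) ≤ e) (he2 : e < DBf t j) :
    offs k n VG VGf Q i.1 (sIdx t i + n - 1)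
        + ((gadStr n VG VGf i.1 (sIdx t i + n - 1)).length + 1)
      < posPost VG VGf Q t i e j := by
  have hik : i.1 < k := i.2
  have hstep := offs_succ k n VG VGf Q i.1 (sIdx t i + n - 1)
  have hle := sIdx_le t hn i
  unfold posPost
  by_cases hij : i.1 + 2 ≤ j
  · rw [if_pos hij]
    have hmono := offs_mono k n VG VGf Q i.1
      (show sIdx t i + n - 1 + 1 ≤ (2*i.1+1)*n from by omega)
    omega
  · rw [if_neg hij]
    rcases Nat.eq_zero_or_pos (e - (j - 2)) with hp | hp
    · rw [show sIdx t i + n - 1 + (e - (j-2)) = sIdx t i + n - 1 from by omega]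
      omega
    · have hmono := offs_mono k n VG VGf Q i.1
        (show sIdx t i + n - 1 + 1 ≤ sIdx t i + n - 1 + (e - (j-2)) from by omega)
      omega

end posLemmas

end main
end SelLB

namespace SelLB
section slot
variable {α : Type*} [Inhabited α] {k n : ℕ} (w : α → ℕ) (c0 c2 : α) (pad : ℕ → α)
  (VG : ℕ → Fin n → List α) (VGf : ℕ → List α) (Q : ℕ) (t : Fin k → Fin n)
  (P : Fin k → List α)

set_option linter.unusedSectionVars false

/-- the matched sub-list for window slot `u`, built from an inner matching `M'`. -/
def slotList (M' : List (Fin k → ℕ)) (u : ℕ) : List (Fin k → ℕ) :=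
  [fun i => offs k n VG VGf Q i.1 (sIdx t i + u)] ++
    ((M'.map (fun f i => (offs k n VG VGf Q i.1 (sIdx t i + u) + 1) + f i)) ++
    [fun i => offs k n VG VGf Q i.1 (sIdx t i + u) + 1
        + (gadStr n VG VGf i.1 (sIdx t i + u)).length])

theorem slotFacts (hk : 2 ≤ k) (hn : 1 ≤ n)
    (hP : ∀ i : Fin k, P i = selString k n c0 c2 pad VG VGf Q (i.1+1))
    (u : ℕ) (hu : u < n) (M' : List (Fin k → ℕ))
    (hM' : IsMatching (fun i : Fin k => gadStr n VG VGf i.1 (sIdx t i + u)) M') :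
    IsMatching P (slotList VG VGf Q t M' u) ∧
    matchWeight w P (⟨0, by omega⟩ : Fin k) (slotList VG VGf Q t M' u)
      = w c0 + (matchWeight w (fun i : Fin k => gadStr n VG VGf i.1 (sIdx t i + u))
          (⟨0, by omega⟩ : Fin k) M' + w c2) ∧
    (∀ x ∈ slotList VG VGf Q t M' u, ∀ i : Fin k,
      offs k n VG VGf Q i.1 (sIdx t i + u) ≤ x i ∧
      x i ≤ offs k n VG VGf Q i.1 (sIdx t i + u)
          + ((gadStr n VG VGf i.1 (sIdx t i + u)).length + 1)) := by
  have hc0 : ∀ i : Fin k, (P i)[offs k n VG VGf Q i.1 (sIdx t i + u)]? = some c0 := by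
    intro i
    rw [hP i]
    have h := getElem?_sel_mid k n c0 c2 pad VG VGf Q i.1 (sIdx t i + u) 0 i.2
      (slot_lt t hn i u hu) (by omega)
    simp only [Nat.add_zero] at h
    rw [getElem?_decorate_c0 c0 c2 pad (i.1+1) _] at h
    exact h
  have hsub : ∀ i : Fin k, ∀ q < (gadStr n VG VGf i.1 (sIdx t i + u)).length,
      (P i)[(offs k n VG VGf Q i.1 (sIdx t i + u) + 1) + q]?
        = (gadStr n VG VGf i.1 (sIdx t i + u))[q]? := by
    intro i q hq
    rw [hP i, show (offs k n VG VGf Q i.1 (sIdx t i + u) + 1) + q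
        = offs k n VG VGf Q i.1 (sIdx t i + u) + (1 + q) from by omega]
    rw [getElem?_sel_mid k n c0 c2 pad VG VGf Q i.1 (sIdx t i + u) (1+q) i.2
      (slot_lt t hn i u hu) (by omega)]
    exact getElem?_decorate_v c0 c2 pad (i.1+1) _ q hq
  have hc2 : ∀ i : Fin k, (P i)[offs k n VG VGf Q i.1 (sIdx t i + u) + 1
      + (gadStr n VG VGf i.1 (sIdx t i + u)).length]? = some c2 := by
    intro i
    rw [hP i, show offs k n VG VGf Q i.1 (sIdx t i + u) + 1
        + (gadStr n VG VGf i.1 (sIdx t i + u)).length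
        = offs k n VG VGf Q i.1 (sIdx t i + u)
          + ((gadStr n VG VGf i.1 (sIdx t i + u)).length + 1) from by omega]
    rw [getElem?_sel_mid k n c0 c2 pad VG VGf Q i.1 (sIdx t i + u)
      ((gadStr n VG VGf i.1 (sIdx t i + u)).length + 1) i.2
      (slot_lt t hn i u hu) (by omega)]
    exact getElem?_decorate_c2 c0 c2 pad (i.1+1) _
  have hmemlt : ∀ f ∈ M', ∀ i : Fin k, f i < (gadStr n VG VGf i.1 (sIdx t i + u)).length := by
    intro f hf i
    obtain ⟨s, hs⟩ := hM'.2 f hf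
    exact (List.getElem?_eq_some_iff.1 (hs i)).1
  have hshift := isMatching_shift (T := P)
    (o := fun i => offs k n VG VGf Q i.1 (sIdx t i + u) + 1) hsub hM'
  refine ⟨?_, ?_, ?_⟩
  · apply isMatching_append (isMatching_single hc0)
    · apply isMatching_append hshift (isMatching_single hc2)
      intro a ha b hb i
      simp only [List.mem_map] at ha
      obtain ⟨f, hf, rfl⟩ := ha
      simp only [List.mem_singleton] at hb
      subst hb
      have := hmemlt f hf i
      dsimp only
      omega
    · intro a ha b hb i
      simp only [List.mem_singleton] at ha
      subst ha
      rcases List.mem_append.1 hb with hb | hb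
      · simp only [List.mem_map] at hb
        obtain ⟨f, hf, rfl⟩ := hb
        dsimp only
        omega
      · simp only [List.mem_singleton] at hb
        subst hb
        dsimp only
        omega
  · rw [slotList, matchWeight_append, matchWeight_append]
    rw [matchWeight_single (w := w) _ _ (hc0 ⟨0, by omega⟩),
      matchWeight_single (w := w) _ _ (hc2 ⟨0, by omega⟩),
      matchWeight_shift (w := w) _ _ (hsub ⟨0, by omega⟩) hM']
  · intro x hx i
    rw [slotList] at hx
    rcases List.mem_append.1 hx with hx | hx
    · simp only [List.mem_singleton] at hx
      subst hx
      dsimp only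
      omega
    rcases List.mem_append.1 hx with hx | hx
    · simp only [List.mem_map] at hx
      obtain ⟨f, hf, rfl⟩ := hx
      have := hmemlt f hf i
      dsimp only
      constructor <;> omega
    · simp only [List.mem_singleton] at hx
      subst hx
      dsimp only
      omega

end slot
end SelLB

namespace SelLB
section blocks
variable {α : Type*} [Inhabited α] {k n : ℕ} (w : α → ℕ) (c0 c2 : α) (pad : ℕ → α)
  (Bw : ℕ → ℕ) (VG : ℕ → Fin n → List α) (VGf : ℕ → List α) (Q : ℕ) (t : Fin k → Fin n)
  (P : Fin k → List α)

set_option linter.unusedSectionVars false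

theorem sum_map_const {β : Type*} (l : List β) (x : ℕ) :
    (l.map (fun _ => x)).sum = l.length * x := by
  induction l with
  | nil => simp
  | cons a l ih => simp [ih, Nat.succ_mul]; ring

theorem icc_sum (hk : 2 ≤ k) (f : ℕ → ℕ) :
    ∑ j ∈ Finset.Icc 2 k, f j = ∑ d ∈ Finset.range (k-1), f (2+d) := by
  rw [show Finset.Icc 2 k
      = Finset.map ⟨fun d => 2+d, fun a b h => by simpa using h⟩ (Finset.range (k-1)) from ?_]
  · rw [Finset.sum_map]; rfl
  · ext x
    simp only [Finset.mem_map, Finset.mem_Icc, Finset.mem_range, Function.Embedding.coeFn_mk, DFunLike.coe]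
    constructor
    · rintro ⟨h1, h2⟩; exact ⟨x-2, by omega, by omega⟩
    · rintro ⟨a, ha, rfl⟩; omega

/-- the block of "before" pad events for symbol `3_j`. -/
def preBlock (j : ℕ) : List (Fin k → ℕ) :=
  (List.range (CBf t j - CBf t (j-1))).map
    (fun c i => posPre VG VGf Q t i ((CBf t k - CBf t j) + c) j)

/-- the block of "after" pad events for symbol `3_j`. -/
def postBlock (j : ℕ) : List (Fin k → ℕ) :=
  (List.range (DBf t j - DBf t (j-1))).map
    (fun c i => posPost VG VGf Q t i (DBf t (j-1) + c) j)

theorem preBlockFacts (hk : 2 ≤ k) (hn : 1 ≤ n) (hQB : CBf t k ≤ Q)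
    (hP : ∀ i : Fin k, P i = selString k n c0 c2 pad VG VGf Q (i.1+1))
    (hwpad : ∀ j ∈ Finset.Icc 2 k, w (pad j) = Bw j)
    (j : ℕ) (h2 : 2 ≤ j) (hjk : j ≤ k) :
    IsMatching P (preBlock VG VGf Q t j) ∧
    matchWeight w P (⟨0, by omega⟩ : Fin k) (preBlock VG VGf Q t j)
      = (CBf t j - CBf t (j-1)) * Bw j := by
  have hm1 : CBf t (j-1) ≤ CBf t j := CBf_mono t (by omega)
  have hm2 : CBf t j ≤ CBf t k := CBf_mono t hjk
  have hsym : ∀ c < CBf t j - CBf t (j-1), ∀ i : Fin k,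
      (P i)[posPre VG VGf Q t i ((CBf t k - CBf t j) + c) j]? = some (pad j) := by
    intro c hc i
    rw [hP i]
    exact preSym c0 c2 pad VG VGf Q t hn hQB i _ j h2 hjk (by omega) (by omega)
  constructor
  · apply isMatching_block'
      (fun c i => posPre VG VGf Q t i ((CBf t k - CBf t j) + c) j) _ (fun _ => pad j)
    · intro i c hc c' hc' hcc
      exact preMono VG VGf Q t hn hQB i _ j _ j h2 le_rfl hjk
        (by omega) (by omega) (by omega) (by omega)
    · exact hsym
  · unfold preBlock
    rw [matchWeight_block' (w := w) _
        (fun c i => posPre VG VGf Q t i ((CBf t k - CBf t j) + c) j) _ (fun _ => pad j)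
        (fun c hc => hsym c hc _), sum_map_const, List.length_range,
      hwpad j (Finset.mem_Icc.2 ⟨h2, hjk⟩)]

theorem postBlockFacts (hk : 2 ≤ k) (hn : 1 ≤ n) (hQD : DBf t k ≤ Q)
    (hP : ∀ i : Fin k, P i = selString k n c0 c2 pad VG VGf Q (i.1+1))
    (hwpad : ∀ j ∈ Finset.Icc 2 k, w (pad j) = Bw j)
    (j : ℕ) (h2 : 2 ≤ j) (hjk : j ≤ k) :
    IsMatching P (postBlock VG VGf Q t j) ∧
    matchWeight w P (⟨0, by omega⟩ : Fin k) (postBlock VG VGf Q t j)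
      = (DBf t j - DBf t (j-1)) * Bw j := by
  have hm1 : DBf t (j-1) ≤ DBf t j := DBf_mono t (by omega)
  have hsym : ∀ c < DBf t j - DBf t (j-1), ∀ i : Fin k,
      (P i)[posPost VG VGf Q t i (DBf t (j-1) + c) j]? = some (pad j) := by
    intro c hc i
    rw [hP i]
    exact postSym c0 c2 pad VG VGf Q t hn hQD i _ j h2 hjk (by omega) (by omega)
  constructor
  · apply isMatching_block'
      (fun c i => posPost VG VGf Q t i (DBf t (j-1) + c) j) _ (fun _ => pad j)
    · intro i c hc c' hc' hcc
      exact postMono VG VGf Q t hn hQD i _ j _ j h2 le_rfl hjk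
        (by omega) (by omega) (by omega) (by omega) (by omega)
    · exact hsym
  · unfold postBlock
    rw [matchWeight_block' (w := w) _
        (fun c i => posPost VG VGf Q t i (DBf t (j-1) + c) j) _ (fun _ => pad j)
        (fun c hc => hsym c hc _), sum_map_const, List.length_range,
      hwpad j (Finset.mem_Icc.2 ⟨h2, hjk⟩)]

end blocks
end SelLB

/-- lower-bound step for the `k`-string selection gadget.  If the
vector gadgets admit matchings of weight `E_n` for every (close or far) tuple
and of weight `E_n + 1` for some far tuple, then the full strings
`P_1, …, P_k` admit a matching of total weight at least `E_G + 1`, where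
`E_U = 2C + E_n` and `E_G = n·E_U + B_2 + (2n+1)·Σ_{j=2}^{k} B_j`. -/
theorem selection_gadget_lower_bound {α : Type*} [Inhabited α] {k n : ℕ}
    (hk : 2 ≤ k) (hn : 1 ≤ n) (w : α → ℕ) (c0 c2 : α) (pad : ℕ → α)
    (C E_n : ℕ) (Bw : ℕ → ℕ)
    (hw0 : w c0 = C) (hw2 : w c2 = C)
    (hwpad : ∀ j ∈ Finset.Icc 2 k, w (pad j) = Bw j)
    (hBdec : ∀ j, 2 ≤ j → j < k → Bw (j + 1) < Bw j)
    (VG : ℕ → Fin n → List α) (VGf : ℕ → List α)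
    (far : (Fin k → Fin n) → Prop)
    -- any tuple consisting of a (real or filler) vector gadget from each string
    -- admits a matching of weight at least `E_n`
    (hclose : ∀ g : Fin k → List α,
      (∀ i : Fin k, g i = VGf ((i : ℕ) + 1) ∨ ∃ t : Fin n, g i = VG ((i : ℕ) + 1) t) →
      ∃ M', IsMatching g M' ∧ E_n ≤ matchWeight w g (⟨0, by omega⟩ : Fin k) M')
    -- a far tuple of vector gadgets admits a matching of weight at least `E_n + 1`
    (hfar : ∀ t : Fin k → Fin n, far t →
      ∃ M', IsMatching (fun i => VG ((i : ℕ) + 1) (t i)) M' ∧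
        E_n + 1 ≤ matchWeight w (fun i => VG ((i : ℕ) + 1) (t i)) (⟨0, by omega⟩ : Fin k) M')
    (Q : ℕ)
    (hQ : Q = (selString k n c0 c2 pad VG VGf 0 k).length)
    (P : Fin k → List α)
    (hP : ∀ i : Fin k, P i = selString k n c0 c2 pad VG VGf Q ((i : ℕ) + 1))
    (hexists : ∃ t : Fin k → Fin n, far t) :
    ∃ M : List (Fin k → ℕ), IsMatching P M ∧
      n * (2 * C + E_n) + Bw 2 + (2 * n + 1) * (∑ j ∈ Finset.Icc 2 k, Bw j) + 1 ≤
        matchWeight w P (⟨0, by omega⟩ : Fin k) M := by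
  obtain ⟨t, ht⟩ := hexists
  have hk0 : 0 < k := by omega
  have hQ2 : k*n + k ≤ Q := by
    rw [hQ]; exact SelLB.length_selString_zero k n c0 c2 pad VG VGf hk hn
  obtain ⟨kk, hkk⟩ : ∃ kk, k = kk + 2 := ⟨k-2, by omega⟩
  have htf1 := SelLB.tf_lt t hn 1
  have htfk := SelLB.tf_lt t hn k
  have hrkn : k*n = kk*n + n + n := by rw [hkk]; ring
  have hQB : SelLB.CBf t k ≤ Q := by
    have h := SelLB.CBf_closed t hn kk
    rw [← hkk] at h
    omega
  have hQD : SelLB.DBf t k ≤ Q := by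
    have h := SelLB.DBf_closed t hn kk
    rw [← hkk] at h
    have hr2 : kk*(n+1) = kk*n + kk := by ring
    omega
  -- the inner (vector-gadget) matchings, one per window slot
  have hinner : ∀ u : ℕ, ∃ M', u < n →
      (IsMatching (fun i : Fin k => SelLB.gadStr n VG VGf i.1 (SelLB.sIdx t i + u)) M' ∧
      (if u = SelLB.tf t 1 then E_n + 1 else E_n) ≤
        matchWeight w (fun i : Fin k => SelLB.gadStr n VG VGf i.1 (SelLB.sIdx t i + u))
          (⟨0, hk0⟩ : Fin k) M') := by
    intro u
    by_cases hu1 : u = SelLB.tf t 1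
    · obtain ⟨M', h1, h2⟩ := hfar t ht
      refine ⟨M', fun _ => ?_⟩
      have hg : (fun i : Fin k => SelLB.gadStr n VG VGf i.1 (SelLB.sIdx t i + u))
          = fun i : Fin k => VG ((i : ℕ)+1) (t i) := by
        funext i
        rw [hu1]
        exact SelLB.gad_far VG VGf t hn i
      rw [hg, if_pos hu1]
      exact ⟨h1, h2⟩
    · obtain ⟨M', h1, h2⟩ := hclose
        (fun i : Fin k => SelLB.gadStr n VG VGf i.1 (SelLB.sIdx t i + u))
        (fun i => SelLB.gad_opts VG VGf i _)
      exact ⟨M', fun _ => ⟨h1, by rw [if_neg hu1]; exact h2⟩⟩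
  choose MS hMS using hinner
  have hslot := fun (u : ℕ) (hu : u < n) =>
    SelLB.slotFacts w c0 c2 pad VG VGf Q t P hk hn hP u hu (MS u) (hMS u hu).1
  -- matchings of the three parts
  have hpreM : IsMatching P (chainBlocks (fun d => SelLB.preBlock VG VGf Q t (k - d)) (k-1)) := by
    apply isMatching_chainBlocks
    · intro d hd
      exact (SelLB.preBlockFacts w c0 c2 pad Bw VG VGf Q t P hk hn hQB hP hwpad (k-d)
        (by omega) (by omega)).1
    · intro m hm m' hm' hmm a ha b hb i
      simp only [SelLB.preBlock, List.mem_map, List.mem_range] at ha hb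
      obtain ⟨c, hc, rfl⟩ := ha
      obtain ⟨c', hc', rfl⟩ := hb
      dsimp only
      have hx1 : SelLB.CBf t (k-m-1) ≤ SelLB.CBf t (k-m) := SelLB.CBf_mono t (by omega)
      have hx2 : SelLB.CBf t (k-m) ≤ SelLB.CBf t k := SelLB.CBf_mono t (by omega)
      have hx3 : SelLB.CBf t (k-m') ≤ SelLB.CBf t (k-m-1) := SelLB.CBf_mono t (by omega)
      exact SelLB.preMono VG VGf Q t hn hQB i _ (k-m) _ (k-m') (by omega) (by omega)
        (by omega) (by omega) (by omega) (by omega) (by omega)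
  have hslotsM : IsMatching P (chainBlocks (fun u => SelLB.slotList VG VGf Q t (MS u) u) n) := by
    apply isMatching_chainBlocks
    · intro u hu; exact (hslot u hu).1
    · intro u hu u' hu' huu a ha b hb i
      have hb1 := (hslot u hu).2.2 a ha i
      have hb2 := (hslot u' hu').2.2 b hb i
      have hstep := SelLB.offs_succ k n VG VGf Q i.1 (SelLB.sIdx t i + u)
      have hmono := SelLB.offs_mono k n VG VGf Q i.1
        (show SelLB.sIdx t i + u + 1 ≤ SelLB.sIdx t i + u' from by omega)
      omega
  have hpostM : IsMatching P (chainBlocks (fun d => SelLB.postBlock VG VGf Q t (d+2)) (k-1)) := by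
    apply isMatching_chainBlocks
    · intro d hd
      exact (SelLB.postBlockFacts w c0 c2 pad Bw VG VGf Q t P hk hn hQD hP hwpad (d+2)
        (by omega) (by omega)).1
    · intro m hm m' hm' hmm a ha b hb i
      simp only [SelLB.postBlock, List.mem_map, List.mem_range] at ha hb
      obtain ⟨c, hc, rfl⟩ := ha
      obtain ⟨c', hc', rfl⟩ := hb
      dsimp only
      have hx1 : SelLB.DBf t (m+2-1) ≤ SelLB.DBf t (m+2) := SelLB.DBf_mono t (by omega)
      have hx2 : SelLB.DBf t (m+2) ≤ SelLB.DBf t (m'+2-1) := SelLB.DBf_mono t (by omega)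
      have hx3 : SelLB.DBf t (m'+2-1) ≤ SelLB.DBf t (m'+2) := SelLB.DBf_mono t (by omega)
      exact SelLB.postMono VG VGf Q t hn hQD i _ (m+2) _ (m'+2) (by omega) (by omega)
        (by omega) (by omega) (by omega) (by omega) (by omega) (by omega)
  -- separation bounds between the parts
  have hpreBound : ∀ a ∈ chainBlocks (fun d => SelLB.preBlock VG VGf Q t (k - d)) (k-1),
      ∀ i : Fin k, a i < SelLB.offs k n VG VGf Q i.1 (SelLB.sIdx t i) := by
    intro a ha i
    obtain ⟨d, hd, hmem⟩ := mem_chainBlocks.1 ha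
    simp only [SelLB.preBlock, List.mem_map, List.mem_range] at hmem
    obtain ⟨c, hc, rfl⟩ := hmem
    dsimp only
    have hx1 : SelLB.CBf t (k-d-1) ≤ SelLB.CBf t (k-d) := SelLB.CBf_mono t (by omega)
    have hx2 : SelLB.CBf t (k-d) ≤ SelLB.CBf t k := SelLB.CBf_mono t (by omega)
    exact SelLB.preUB VG VGf Q t hn hQB i _ (k-d) (by omega) (by omega) (by omega) (by omega)
  have hslotBound : ∀ a ∈ chainBlocks (fun u => SelLB.slotList VG VGf Q t (MS u) u) n,
      ∀ i : Fin k,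
      SelLB.offs k n VG VGf Q i.1 (SelLB.sIdx t i) ≤ a i ∧
      a i ≤ SelLB.offs k n VG VGf Q i.1 (SelLB.sIdx t i + n - 1)
          + ((SelLB.gadStr n VG VGf i.1 (SelLB.sIdx t i + n - 1)).length + 1) := by
    intro a ha i
    obtain ⟨u, hu, hmem⟩ := mem_chainBlocks.1 ha
    have hb := (hslot u hu).2.2 a hmem i
    have hlow := SelLB.offs_mono k n VG VGf Q i.1
      (show SelLB.sIdx t i ≤ SelLB.sIdx t i + u from by omega)
    constructor
    · omega
    · rcases Nat.lt_or_ge (u+1) n with hun | hun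
      · have hstep := SelLB.offs_succ k n VG VGf Q i.1 (SelLB.sIdx t i + u)
        have hmono := SelLB.offs_mono k n VG VGf Q i.1
          (show SelLB.sIdx t i + u + 1 ≤ SelLB.sIdx t i + n - 1 from by omega)
        omega
      · have hEq : SelLB.sIdx t i + u = SelLB.sIdx t i + n - 1 := by omega
        rw [hEq] at hb
        omega
  have hpostBound : ∀ b ∈ chainBlocks (fun d => SelLB.postBlock VG VGf Q t (d+2)) (k-1),
      ∀ i : Fin k,
      SelLB.offs k n VG VGf Q i.1 (SelLB.sIdx t i + n - 1)
        + ((SelLB.gadStr n VG VGf i.1 (SelLB.sIdx t i + n - 1)).length + 1) < b i := by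
    intro b hb i
    obtain ⟨d, hd, hmem⟩ := mem_chainBlocks.1 hb
    simp only [SelLB.postBlock, List.mem_map, List.mem_range] at hmem
    obtain ⟨c, hc, rfl⟩ := hmem
    dsimp only
    have hx1 : SelLB.DBf t (d+2-1) ≤ SelLB.DBf t (d+2) := SelLB.DBf_mono t (by omega)
    exact SelLB.postLB VG VGf Q t hn i _ (d+2) (by omega) (by omega) (by omega) (by omega)
  refine ⟨chainBlocks (fun d => SelLB.preBlock VG VGf Q t (k - d)) (k-1) ++
    (chainBlocks (fun u => SelLB.slotList VG VGf Q t (MS u) u) n ++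
     chainBlocks (fun d => SelLB.postBlock VG VGf Q t (d+2)) (k-1)), ?_, ?_⟩
  · apply isMatching_append hpreM
    · apply isMatching_append hslotsM hpostM
      intro a ha b hb i
      have h1 := (hslotBound a ha i).2
      have h2 := hpostBound b hb i
      omega
    · intro a ha b hb i
      have h1 := hpreBound a ha i
      rcases List.mem_append.1 hb with hb | hb
      · have h2 := (hslotBound b hb i).1
        omega
      · have h2 := hpostBound b hb i
        have h3 := SelLB.offs_mono k n VG VGf Q i.1
          (show SelLB.sIdx t i ≤ SelLB.sIdx t i + n - 1 from by omega)
        have h4 := SelLB.offs_ge k n VG VGf Q i.1 (SelLB.sIdx t i)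
        omega
  · -- the weight bound
    have hWpre : matchWeight w P (⟨0, hk0⟩ : Fin k)
        (chainBlocks (fun d => SelLB.preBlock VG VGf Q t (k - d)) (k-1))
        = ∑ d ∈ Finset.range (k-1),
            (SelLB.CBf t (k-d) - SelLB.CBf t (k-d-1)) * Bw (k-d) := by
      rw [matchWeight_chainBlocks]
      apply Finset.sum_congr rfl
      intro d hd
      simp only [Finset.mem_range] at hd
      exact (SelLB.preBlockFacts w c0 c2 pad Bw VG VGf Q t P hk hn hQB hP hwpad (k-d)
        (by omega) (by omega)).2
    have hWpost : matchWeight w P (⟨0, hk0⟩ : Fin k)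
        (chainBlocks (fun d => SelLB.postBlock VG VGf Q t (d+2)) (k-1))
        = ∑ d ∈ Finset.range (k-1),
            (SelLB.DBf t (d+2) - SelLB.DBf t (d+2-1)) * Bw (d+2) := by
      rw [matchWeight_chainBlocks]
      apply Finset.sum_congr rfl
      intro d hd
      simp only [Finset.mem_range] at hd
      exact (SelLB.postBlockFacts w c0 c2 pad Bw VG VGf Q t P hk hn hQD hP hwpad (d+2)
        (by omega) (by omega)).2
    have hWslots : n * (2*C + E_n) + 1 ≤ matchWeight w P (⟨0, hk0⟩ : Fin k)
        (chainBlocks (fun u => SelLB.slotList VG VGf Q t (MS u) u) n) := by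
      rw [matchWeight_chainBlocks]
      calc n*(2*C+E_n) + 1
          = ∑ u ∈ Finset.range n, ((2*C+E_n) + (if u = SelLB.tf t 1 then 1 else 0)) := by
            rw [Finset.sum_add_distrib, Finset.sum_const, Finset.card_range, smul_eq_mul,
              Finset.sum_ite_eq' (Finset.range n) (SelLB.tf t 1) (fun _ => 1),
              if_pos (Finset.mem_range.2 (SelLB.tf_lt t hn 1))]
        _ ≤ _ := by
            apply Finset.sum_le_sum
            intro u hu
            rw [Finset.mem_range] at hu
            rw [(hslot u hu).2.1, hw0, hw2]
            have h2 : (if u = SelLB.tf t 1 then E_n + 1 else E_n) ≤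
                matchWeight w (fun i : Fin k => SelLB.gadStr n VG VGf i.1 (SelLB.sIdx t i + u))
                  (⟨0, hk0⟩ : Fin k) (MS u) := (hMS u hu).2
            split_ifs at h2 ⊢ <;> omega
    -- pad weight bookkeeping
    have hterm : ∀ j ∈ Finset.Icc 2 k,
        (SelLB.CBf t j - SelLB.CBf t (j-1)) * Bw j + (SelLB.DBf t j - SelLB.DBf t (j-1)) * Bw j
          = (2*n+1) * Bw j + (if j = 2 then Bw j else 0) := by
      intro j hj
      rw [Finset.mem_Icc] at hj
      obtain ⟨jj, rfl⟩ : ∃ jj, j = jj + 2 := ⟨j-2, by omega⟩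
      have hC : SelLB.CBf t (jj+2) = SelLB.CBf t (jj+1)
          + ((n + SelLB.tf t (jj+2)) - SelLB.tf t (jj+1)) + (if jj = 0 then 1 else 0) := by
        rw [SelLB.CBf]
      have hD : SelLB.DBf t (jj+2) = SelLB.DBf t (jj+1)
          + (((n+1) + SelLB.tf t (jj+1)) - SelLB.tf t (jj+2)) := by
        rw [SelLB.DBf]
      have h1 := SelLB.tf_lt t hn (jj+1)
      have h2 := SelLB.tf_lt t hn (jj+2)
      rw [show jj+2-1 = jj+1 from rfl, ← Nat.add_mul]
      have hb : SelLB.CBf t (jj+2) - SelLB.CBf t (jj+1)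
          + (SelLB.DBf t (jj+2) - SelLB.DBf t (jj+1))
          = 2*n+1 + (if jj = 0 then 1 else 0) := by
        rw [hC, hD]
        split_ifs <;> omega
      rw [hb]
      rcases Nat.eq_zero_or_pos jj with h0 | h0
      · rw [if_pos h0, if_pos (by omega : jj + 2 = 2)]
        ring
      · rw [if_neg (by omega), if_neg (by omega : ¬(jj+2 = 2))]
        ring
    have e1 : ∑ d ∈ Finset.range (k-1),
        (SelLB.CBf t (k-d) - SelLB.CBf t (k-d-1)) * Bw (k-d)
        = ∑ j ∈ Finset.Icc 2 k, (SelLB.CBf t j - SelLB.CBf t (j-1)) * Bw j := by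
      rw [SelLB.icc_sum hk (fun j => (SelLB.CBf t j - SelLB.CBf t (j-1)) * Bw j)]
      rw [← Finset.sum_range_reflect
        (fun d => (SelLB.CBf t (2+d) - SelLB.CBf t (2+d-1)) * Bw (2+d)) (k-1)]
      apply Finset.sum_congr rfl
      intro d hd
      simp only [Finset.mem_range] at hd
      rw [show 2 + (k-1-1-d) = k - d from by omega]
    have e2 : ∑ d ∈ Finset.range (k-1),
        (SelLB.DBf t (d+2) - SelLB.DBf t (d+2-1)) * Bw (d+2)
        = ∑ j ∈ Finset.Icc 2 k, (SelLB.DBf t j - SelLB.DBf t (j-1)) * Bw j := by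
      rw [SelLB.icc_sum hk (fun j => (SelLB.DBf t j - SelLB.DBf t (j-1)) * Bw j)]
      apply Finset.sum_congr rfl
      intro d hd
      rw [show (2:ℕ) + d = d + 2 from by omega]
    have hpads : ∑ j ∈ Finset.Icc 2 k, (SelLB.CBf t j - SelLB.CBf t (j-1)) * Bw j
        + ∑ j ∈ Finset.Icc 2 k, (SelLB.DBf t j - SelLB.DBf t (j-1)) * Bw j
        = Bw 2 + (2*n+1) * (∑ j ∈ Finset.Icc 2 k, Bw j) := by
      rw [← Finset.sum_add_distrib, Finset.sum_congr rfl hterm, Finset.sum_add_distrib,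
        Finset.sum_ite_eq' (Finset.Icc 2 k) 2 (fun j => Bw j),
        if_pos (Finset.mem_Icc.2 ⟨le_refl 2, hk⟩), ← Finset.mul_sum]
      omega
    have hfinal : n * (2 * C + E_n) + Bw 2 + (2 * n + 1) * (∑ j ∈ Finset.Icc 2 k, Bw j) + 1 ≤
        matchWeight w P (⟨0, hk0⟩ : Fin k)
          (chainBlocks (fun d => SelLB.preBlock VG VGf Q t (k - d)) (k-1) ++
          (chainBlocks (fun u => SelLB.slotList VG VGf Q t (MS u) u) n ++
           chainBlocks (fun d => SelLB.postBlock VG VGf Q t (d+2)) (k-1))) := by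
      rw [matchWeight_append, matchWeight_append, hWpre, hWpost]
      omega
    exact hfinal
end
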